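/- arXiv:2007.04804 — 4 statements merged into one kernel-verified Lean document; each statement's English description precedes it below -/
import Mathlib

section
/- Let T, S, X, Y ∈ B_A(H). Then w_A(T X S^{#_A} + S Y T^{#_A}) ≤ 2 ‖T‖_A ‖S‖_A · w_𝔸([[O, X],[Y, O]]) and w_A(T X S^{#_A} − S Y T^{#_A}) ≤ 2 ‖T‖_A ‖S‖_A · w_𝔸([[O, X],[Y, O]]). -/
noncomputable section

open ContinuousLinearMap

/-- The semi-inner ℂ product induced by a positive operator `A`: `⟪x, y⟫_A = ⟪A x, y⟫`. -/
def sInnerA {E : Type*} [NormedAddCommGroup E] [InnerProductSpace ℂ E]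
    (A : E →L[ℂ] E) (x y : E) : ℂ :=
  inner ℂ (A x) y

/-- The seminorm induced by `A`: `‖x‖_A = √(re ⟪A x, x⟫)`. -/
def sNormA {E : Type*} [NormedAddCommGroup E] [InnerProductSpace ℂ E]
    (A : E →L[ℂ] E) (x : E) : ℝ :=
  Real.sqrt (sInnerA A x x).re

/-- The `A`-operator seminorm: `sup {‖T x‖_A : x ∈ closure (range A), ‖x‖_A = 1}`. -/
def opNormA {E : Type*} [NormedAddCommGroup E] [InnerProductSpace ℂ E]
    (A T : E →L[ℂ] E) : ℝ :=
  sSup {r | ∃ x ∈ closure (Set.range A), sNormA A x = 1 ∧ r = sNormA A (T x)}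

/-- The `A`-numerical radius: `sup {|⟪T x, x⟫_A| : ‖x‖_A = 1}`. -/
def wA {E : Type*} [NormedAddCommGroup E] [InnerProductSpace ℂ E]
    (A T : E →L[ℂ] E) : ℝ :=
  sSup {r | ∃ x, sNormA A x = 1 ∧ r = ‖sInnerA A (T x) x‖}

/-- The `A`-Crawford number: `inf {|⟪T x, x⟫_A| : ‖x‖_A = 1}`. -/
def cA {E : Type*} [NormedAddCommGroup E] [InnerProductSpace ℂ E]
    (A T : E →L[ℂ] E) : ℝ :=
  sInf {r | ∃ x, sNormA A x = 1 ∧ r = ‖sInnerA A (T x) x‖}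

/-- `T ∈ B_A(H)`, i.e. the range of `T* A` is contained in the range of `A`. -/
def memBA {E : Type*} [NormedAddCommGroup E] [InnerProductSpace ℂ E] [CompleteSpace E]
    (A T : E →L[ℂ] E) : Prop :=
  Set.range ((adjoint T) ∘L A) ⊆ Set.range A

/-- `S` is the distinguished `A`-adjoint `T^{#_A}` of `T`:
`A ∘ S = T* ∘ A` and `R(S) ⊆ closure (R(A))`. -/
def IsSharpA {E : Type*} [NormedAddCommGroup E] [InnerProductSpace ℂ E] [CompleteSpace E]
    (A T S : E →L[ℂ] E) : Prop :=
  A ∘L S = (adjoint T) ∘L A ∧ Set.range S ⊆ closure (Set.range A)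

/-- The `2 × 2` operator matrix `[[X, Y], [Z, W]]` acting blockwise on
the Hilbert space direct sum `H ⊕ H`. -/
def blk2 {H : Type*} [NormedAddCommGroup H] [InnerProductSpace ℂ H]
    (X Y Z W : H →L[ℂ] H) : WithLp 2 (H × H) →L[ℂ] WithLp 2 (H × H) :=
  ((WithLp.prodContinuousLinearEquiv 2 ℂ H H).symm : (H × H) →L[ℂ] WithLp 2 (H × H)) ∘L
    ((X ∘L ContinuousLinearMap.fst ℂ H H + Y ∘L ContinuousLinearMap.snd ℂ H H).prod
      (Z ∘L ContinuousLinearMap.fst ℂ H H + W ∘L ContinuousLinearMap.snd ℂ H H)) ∘L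
    ((WithLp.prodContinuousLinearEquiv 2 ℂ H H) : WithLp 2 (H × H) →L[ℂ] H × H)


section Stmt6Aux
open Filter Topology ComplexConjugate
set_option linter.unusedSectionVars false
set_option synthInstance.maxHeartbeats 1000000
set_option maxHeartbeats 1000000

variable {H : Type*} [NormedAddCommGroup H] [InnerProductSpace ℂ H] [CompleteSpace H]

lemma douglasCLM (A B : H →L[ℂ] H) (hr : Set.range B ⊆ Set.range A) :
    ∃ C : H →L[ℂ] H, A ∘L C = B := by
  classical
  set Kc : Submodule ℂ H := (LinearMap.ker (A : H →ₗ[ℂ] H))ᗮ with hKcdef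
  haveI : CompleteSpace (LinearMap.ker (A : H →ₗ[ℂ] H) : Submodule ℂ H) := A.isClosed_ker.completeSpace_coe
  haveI : CompleteSpace Kc := (Submodule.isClosed_orthogonal _).completeSpace_coe
  have hpre : ∀ x : H, ∃ w, A w = B x := fun x => hr (Set.mem_range_self x)
  have hinj : ∀ u ∈ Kc, A u = 0 → u = 0 := by
    intro u hu h0
    have hker : u ∈ LinearMap.ker (A : H →ₗ[ℂ] H) := LinearMap.mem_ker.mpr h0
    have h := Submodule.inner_right_of_mem_orthogonal (𝕜 := ℂ) hker hu
    exact inner_self_eq_zero.mp h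
  have huniq : ∀ u v, u ∈ Kc → v ∈ Kc → A u = A v → u = v := by
    intro u v hu hv h
    have := hinj (u - v) (Submodule.sub_mem _ hu hv) (by rw [map_sub, h, sub_self])
    exact sub_eq_zero.mp this
  set g : H → H := fun x => (Submodule.orthogonalProjection Kc (hpre x).choose : H) with hgdef
  have hmem : ∀ x, g x ∈ Kc := fun x => (Submodule.orthogonalProjection Kc (hpre x).choose).2
  have hg : ∀ x, A (g x) = B x := by
    intro x
    have hw : A (hpre x).choose = B x := (hpre x).choose_spec
    have hsub : (hpre x).choose - g x ∈ Kcᗮ :=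
      Submodule.sub_starProjection_mem_orthogonal _
    have horth : Kcᗮ = LinearMap.ker (A : H →ₗ[ℂ] H) := Submodule.orthogonal_orthogonal _
    rw [horth, LinearMap.mem_ker, map_sub, sub_eq_zero] at hsub
    rw [← hw]; exact hsub.symm
  let glin : H →ₗ[ℂ] H :=
    { toFun := g
      map_add' := fun x y => huniq _ _ (hmem _) (Submodule.add_mem _ (hmem _) (hmem _))
        (by rw [hg, map_add, map_add, hg, hg])
      map_smul' := fun c x => huniq _ _ (hmem _) (Submodule.smul_mem _ _ (hmem _))
        (by rw [hg, map_smul, map_smul, hg]; rfl) }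
  have hcont : Continuous glin := by
    apply glin.continuous_of_seq_closed_graph
    intro u x y hux huy
    have hyK : y ∈ Kc := (Submodule.isClosed_orthogonal _).mem_of_tendsto huy
      (Eventually.of_forall fun n => hmem (u n))
    have h1 : Tendsto (fun n => A (glin (u n))) atTop (𝓝 (A y)) :=
      (A.continuous.tendsto y).comp huy
    have h2 : (fun n => A (glin (u n))) = fun n => B (u n) := funext fun n => hg (u n)
    have h3 : Tendsto (fun n => B (u n)) atTop (𝓝 (B x)) := (B.continuous.tendsto x).comp hux
    rw [h2] at h1
    have hAy : A y = B x := tendsto_nhds_unique h1 h3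
    exact huniq y (glin x) hyK (hmem x) (by rw [hAy]; exact (hg x).symm)
  refine ⟨⟨glin, hcont⟩, ?_⟩
  ext x
  exact hg x

section RA
variable {A R : H →L[ℂ] H} (hA : A.IsPositive)
  (hRsa : IsSelfAdjoint R) (hRR : ∀ x, R (R x) = A x)

include hRsa in
lemma innerRR (u w : H) : (inner ℂ (R u) w : ℂ) = inner ℂ u (R w) := by
  conv_lhs => rw [← hRsa.adjoint_eq]
  exact adjoint_inner_left _ _ _


include hRsa hRR in
lemma innerAR (u w : H) : (inner ℂ (A u) w : ℂ) = inner ℂ (R u) (R w) := by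
  rw [← hRR u, innerRR hRsa]


include hRsa hRR in
lemma normRsq (u : H) : ‖R u‖ ^ 2 = (inner ℂ (A u) u : ℂ).re := by
  rw [innerAR hRsa hRR, inner_self_eq_norm_sq_to_K]
  norm_cast


include hRsa hRR in
lemma keystep {D : H →L[ℂ] H} (hD : A ∘L D = adjoint D ∘L A) (v : H) :
    ‖R (D v)‖ ^ 2 ≤ ‖R v‖ * ‖R (D (D v))‖ := by
  have h2 : (inner ℂ (A (D v)) (D v) : ℂ) = inner ℂ (R v) (R (D (D v))) := by
    calc (inner ℂ (A (D v)) (D v) : ℂ) = inner ℂ ((A ∘L D) v) (D v) := rfl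
      _ = inner ℂ (adjoint D (A v)) (D v) := by rw [hD]; rfl
      _ = inner ℂ (A v) (D (D v)) := adjoint_inner_left _ _ _
      _ = inner ℂ (R v) (R (D (D v))) := innerAR hRsa hRR _ _
  calc ‖R (D v)‖ ^ 2 = (inner ℂ (A (D v)) (D v) : ℂ).re := normRsq hRsa hRR _
    _ = (inner ℂ (R v) (R (D (D v))) : ℂ).re := by rw [h2]
    _ ≤ ‖(inner ℂ (R v) (R (D (D v))) : ℂ)‖ := Complex.re_le_norm _
    _ ≤ ‖R v‖ * ‖R (D (D v))‖ := norm_inner_le_norm _ _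


include hRsa hRR in
lemma iter_pow : ∀ n : ℕ, ∀ D : H →L[ℂ] H, A ∘L D = adjoint D ∘L A → ∀ v : H,
    ‖R (D v)‖ ^ (2 ^ n) ≤ ‖R v‖ ^ (2 ^ n - 1) * ‖R ((D ^ (2 ^ n)) v)‖ := by
  intro n
  induction n with
  | zero => intro D hD v; simp
  | succ n ih =>
    intro D hD v
    have h1 : (1:ℕ) ≤ 2 ^ n := Nat.one_le_two_pow
    have hD2 : A ∘L (D ∘L D) = adjoint (D ∘L D) ∘L A := by
      have ha : adjoint (D ∘L D) = adjoint D ∘L adjoint D := adjoint_comp _ _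
      have hD' : A * D = adjoint D * A := hD
      have hmul : A * (D * D) = adjoint D * adjoint D * A := by
        calc A * (D * D) = A * D * D := (mul_assoc _ _ _).symm
          _ = adjoint D * A * D := by rw [hD']
          _ = adjoint D * (A * D) := mul_assoc _ _ _
          _ = adjoint D * (adjoint D * A) := by rw [hD']
          _ = adjoint D * adjoint D * A := (mul_assoc _ _ _).symm
      rw [ha]
      exact hmul
    have key := keystep hRsa hRR hD v
    have hDD : ∀ w, (D ∘L D) w = D (D w) := fun w => rfl
    calc ‖R (D v)‖ ^ (2 ^ (n + 1)) = (‖R (D v)‖ ^ 2) ^ (2 ^ n) := by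
          rw [← pow_mul, pow_succ, mul_comm]
      _ ≤ (‖R v‖ * ‖R ((D ∘L D) v)‖) ^ (2 ^ n) := by
          apply pow_le_pow_left₀ (by positivity) (by rw [hDD]; exact key)
      _ = ‖R v‖ ^ (2 ^ n) * ‖R ((D ∘L D) v)‖ ^ (2 ^ n) := mul_pow _ _ _
      _ ≤ ‖R v‖ ^ (2 ^ n) * (‖R v‖ ^ (2 ^ n - 1) * ‖R (((D ∘L D) ^ (2 ^ n)) v)‖) := by
          exact mul_le_mul_of_nonneg_left (ih (D ∘L D) hD2 v) (by positivity)
      _ = ‖R v‖ ^ (2 ^ (n + 1) - 1) * ‖R ((D ^ (2 ^ (n + 1))) v)‖ := by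
          rw [← mul_assoc, ← pow_add]
          congr 2
          · have h2 : 2 ^ (n+1) = 2 ^ n + 2 ^ n := by rw [pow_succ]; ring
            omega
          · have : (D ∘L D) = D ^ 2 := (sq D).symm
            rw [this, ← pow_mul]
            congr 1
            rw [pow_succ, mul_comm]

include hRsa hRR in
lemma iterbound {D : H →L[ℂ] H} (hD : A ∘L D = adjoint D ∘L A) (v : H) :
    ‖R (D v)‖ ≤ ‖D‖ * ‖R v‖ := by
  by_cases hv : ‖R v‖ = 0
  · have h := keystep hRsa hRR hD v
    rw [hv, zero_mul] at h
    have : ‖R (D v)‖ = 0 := by nlinarith [norm_nonneg (R (D v))]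
    rw [this, hv, mul_zero]
  · have hvpos : 0 < ‖R v‖ := lt_of_le_of_ne (norm_nonneg _) (Ne.symm hv)
    set c : ℝ := ‖R‖ * ‖v‖ / ‖R v‖ with hc
    have hRvle : ‖R v‖ ≤ ‖R‖ * ‖v‖ := R.le_opNorm v
    have hcpos : 0 < c := div_pos (lt_of_lt_of_le hvpos hRvle) hvpos
    have hbound : ∀ n : ℕ, ‖R (D v)‖ ≤ ‖D‖ * ‖R v‖ * c ^ ((1/2 : ℝ) ^ n) := by
      intro n
      have h2n : (0:ℕ) < 2 ^ n := Nat.pow_pos (by norm_num)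
      have h1 := iter_pow hRsa hRR n D hD v
      have h2 : ‖R ((D ^ 2 ^ n) v)‖ ≤ ‖R‖ * (‖D‖ ^ (2 ^ n) * ‖v‖) := by
        calc ‖R ((D ^ 2 ^ n) v)‖ ≤ ‖R‖ * ‖(D ^ 2 ^ n) v‖ := R.le_opNorm _
          _ ≤ ‖R‖ * (‖D ^ 2 ^ n‖ * ‖v‖) := by gcongr; exact (D ^ 2^n).le_opNorm v
          _ ≤ ‖R‖ * (‖D‖ ^ (2 ^ n) * ‖v‖) := by
              gcongr
              exact norm_pow_le' D h2n
      apply le_of_pow_le_pow_left₀ h2n.ne' (by positivity)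
      have hrpow : (c ^ ((1/2:ℝ) ^ n)) ^ (2 ^ n : ℕ) = c := by
        rw [← Real.rpow_natCast (c ^ ((1/2:ℝ) ^ n)) (2 ^ n), ← Real.rpow_mul hcpos.le]
        rw [show ((1/2:ℝ) ^ n * ((2:ℕ) ^ n : ℕ) : ℝ) = 1 by push_cast; rw [div_pow]; field_simp; exact one_pow n]
        exact Real.rpow_one c
      calc ‖R (D v)‖ ^ (2 ^ n) ≤ ‖R v‖ ^ (2 ^ n - 1) * ‖R ((D ^ 2 ^ n) v)‖ := h1
        _ ≤ ‖R v‖ ^ (2 ^ n - 1) * (‖R‖ * (‖D‖ ^ (2 ^ n) * ‖v‖)) := by gcongr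
        _ = (‖D‖ * ‖R v‖ * c ^ ((1/2:ℝ) ^ n)) ^ (2 ^ n) := by
            rw [mul_pow, mul_pow, hrpow, hc]
            rw [show (2:ℕ)^n = (2^n - 1) + 1 by omega, pow_succ]
            field_simp
            rw [Nat.add_sub_cancel, pow_succ]; ring
    have htail : Tendsto (fun n : ℕ => ‖D‖ * ‖R v‖ * c ^ ((1/2:ℝ) ^ n)) atTop
        (𝓝 (‖D‖ * ‖R v‖ * 1)) := by
      apply Tendsto.mul tendsto_const_nhds
      have hexp : Tendsto (fun n : ℕ => (1/2:ℝ) ^ n) atTop (𝓝 0) := by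
        apply tendsto_pow_atTop_nhds_zero_of_lt_one (by norm_num) (by norm_num)
      have hcont : ContinuousAt (fun x : ℝ => c ^ x) 0 :=
        (Real.continuousAt_const_rpow hcpos.ne')
      have := hcont.tendsto.comp hexp
      simpa [Real.rpow_zero, Function.comp_def] using this
    have := ge_of_tendsto' htail hbound
    simpa using this

include hRsa hRR in
lemma sNormA_eqR (x : H) : sNormA A x = ‖R x‖ := by
  unfold sNormA sInnerA
  rw [← normRsq hRsa hRR, Real.sqrt_sq (norm_nonneg _)]


omit [CompleteSpace H] in
lemma opNormA_nonneg (A T : H →L[ℂ] H) : 0 ≤ opNormA A T :=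
  Real.sSup_nonneg (by rintro r ⟨x, -, -, rfl⟩; exact Real.sqrt_nonneg _)


include hA hRsa hRR in
lemma memBA_bound {X : H →L[ℂ] H} (hX : memBA A X) :
    ∃ c : ℝ, 0 ≤ c ∧ ∀ v, ‖R (X v)‖ ≤ c * ‖R v‖ := by
  obtain ⟨C, hC⟩ := douglasCLM A (adjoint X ∘L A) hX
  have hadjC : adjoint C ∘L A = A ∘L X := by
    have h := congrArg adjoint hC
    rwa [adjoint_comp, adjoint_comp, adjoint_adjoint, hA.isSelfAdjoint.adjoint_eq] at h
  set D := C ∘L X with hDdef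
  have hD : A ∘L D = adjoint D ∘L A := by
    have h1 : adjoint D = adjoint X ∘L adjoint C := adjoint_comp _ _
    have hC' : A * C = adjoint X * A := hC
    have hadjC' : adjoint C * A = A * X := hadjC
    have : A * (C * X) = adjoint X * adjoint C * A := by
      calc A * (C * X) = A * C * X := (mul_assoc _ _ _).symm
        _ = adjoint X * A * X := by rw [hC']
        _ = adjoint X * (A * X) := mul_assoc _ _ _
        _ = adjoint X * (adjoint C * A) := by rw [hadjC']
        _ = adjoint X * adjoint C * A := (mul_assoc _ _ _).symm
    rw [h1]
    exact this
  refine ⟨Real.sqrt ‖D‖, Real.sqrt_nonneg _, fun v => ?_⟩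
  have h1 : ‖R (X v)‖ ^ 2 ≤ ‖D‖ * ‖R v‖ ^ 2 := by
    have e2 : (inner ℂ (A (X v)) (X v) : ℂ) = inner ℂ (R v) (R (D v)) := by
      calc (inner ℂ (A (X v)) (X v) : ℂ) = inner ℂ ((A ∘L X) v) (X v) := rfl
        _ = inner ℂ ((adjoint C ∘L A) v) (X v) := by rw [hadjC]
        _ = inner ℂ (adjoint C (A v)) (X v) := rfl
        _ = inner ℂ (A v) (C (X v)) := adjoint_inner_left _ _ _
        _ = inner ℂ (R v) (R (C (X v))) := innerAR hRsa hRR _ _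
        _ = inner ℂ (R v) (R (D v)) := rfl
    calc ‖R (X v)‖ ^ 2 = (inner ℂ (A (X v)) (X v) : ℂ).re := normRsq hRsa hRR _
      _ = (inner ℂ (R v) (R (D v)) : ℂ).re := by rw [e2]
      _ ≤ ‖(inner ℂ (R v) (R (D v)) : ℂ)‖ := Complex.re_le_norm _
      _ ≤ ‖R v‖ * ‖R (D v)‖ := norm_inner_le_norm _ _
      _ ≤ ‖R v‖ * (‖D‖ * ‖R v‖) := by
          apply mul_le_mul_of_nonneg_left (iterbound hRsa hRR hD v) (norm_nonneg _)
      _ = ‖D‖ * ‖R v‖ ^ 2 := by ring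
  apply le_of_pow_le_pow_left₀ two_ne_zero (by positivity)
  calc ‖R (X v)‖ ^ 2 ≤ ‖D‖ * ‖R v‖ ^ 2 := h1
    _ = (Real.sqrt ‖D‖ * ‖R v‖) ^ 2 := by
        rw [mul_pow, Real.sq_sqrt (norm_nonneg _)]

include hA hRsa hRR in
lemma opN_bound {T : H →L[ℂ] H} {cT : ℝ} (hcT0 : 0 ≤ cT)
    (hcT : ∀ v, ‖R (T v)‖ ≤ cT * ‖R v‖) (v : H) :
    ‖R (T v)‖ ≤ opNormA A T * ‖R v‖ := by
  have hAsym : ∀ u w : H, (inner ℂ (A u) w : ℂ) = inner ℂ u (A w) := by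
    intro u w
    conv_lhs => rw [← hA.isSelfAdjoint.adjoint_eq]
    exact adjoint_inner_left _ _ _
  set Kt : Submodule ℂ H := (LinearMap.range (A : H →ₗ[ℂ] H)).topologicalClosure with hKt
  haveI : CompleteSpace Kt := (LinearMap.range (A : H →ₗ[ℂ] H)).isClosed_topologicalClosure.completeSpace_coe
  have hcoe : (Kt : Set H) = closure (Set.range ⇑A) := by
    rw [hKt, Submodule.topologicalClosure_coe, LinearMap.coe_range]; rfl
  set v₁ : H := (Submodule.orthogonalProjection Kt v : H) with hv₁
  have hv1K : v₁ ∈ Kt := (Submodule.orthogonalProjection Kt v).2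
  have hv0 : v - v₁ ∈ Ktᗮ := Submodule.sub_starProjection_mem_orthogonal v
  have hA0 : A (v - v₁) = 0 := by
    have hmem : A (A (v - v₁)) ∈ Kt :=
      (LinearMap.range (A : H →ₗ[ℂ] H)).le_topologicalClosure (LinearMap.mem_range_self _ _)
    have h := Submodule.inner_right_of_mem_orthogonal hmem hv0
    have h2 : (inner ℂ (A (v - v₁)) (A (v - v₁)) : ℂ) = 0 := by
      rw [hAsym, ← inner_conj_symm, h, map_zero]
    exact inner_self_eq_zero.mp h2
  have hR0 : R (v - v₁) = 0 := by
    have h := normRsq hRsa hRR (v - v₁)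
    rw [hA0, inner_zero_left] at h
    have h' : ‖R (v - v₁)‖ ^ 2 = 0 := by simpa using h
    exact norm_eq_zero.mp (pow_eq_zero_iff two_ne_zero |>.mp h')
  have hRv : R v = R v₁ := by
    have : R v - R v₁ = 0 := by rw [← map_sub]; exact hR0
    exact sub_eq_zero.mp this
  have hsplit : T v = T v₁ + T (v - v₁) := by rw [← map_add]; congr 1; abel
  have hTv : ‖R (T v)‖ ≤ ‖R (T v₁)‖ := by
    have h2 : R (T v) = R (T v₁) + R (T (v - v₁)) := by rw [← map_add, ← hsplit]
    have h3 : ‖R (T (v - v₁))‖ ≤ 0 := by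
      have := hcT (v - v₁)
      rw [hR0, norm_zero, mul_zero] at this
      exact this
    calc ‖R (T v)‖ = ‖R (T v₁) + R (T (v - v₁))‖ := by rw [h2]
      _ ≤ ‖R (T v₁)‖ + ‖R (T (v - v₁))‖ := norm_add_le _ _
      _ ≤ ‖R (T v₁)‖ + 0 := by linarith
      _ = ‖R (T v₁)‖ := add_zero _
  by_cases hm : ‖R v₁‖ = 0
  · have h4 : ‖R (T v₁)‖ ≤ 0 := by
      have := hcT v₁; rw [hm, mul_zero] at this; exact this
    rw [hRv, hm, mul_zero]
    linarith
  · have hmpos : 0 < ‖R v₁‖ := lt_of_le_of_ne (norm_nonneg _) (Ne.symm hm)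
    set x' : H := ((‖R v₁‖⁻¹ : ℝ) : ℂ) • v₁ with hx'
    have hx'K : x' ∈ Kt := Kt.smul_mem _ hv1K
    have hx'cl : x' ∈ closure (Set.range ⇑A) := hcoe ▸ hx'K
    have hRx' : ‖R x'‖ = 1 := by
      rw [hx', map_smul, norm_smul, Complex.norm_real, Real.norm_eq_abs,
        abs_of_nonneg (inv_nonneg.mpr (norm_nonneg _)), inv_mul_cancel₀ hm]
    have hsN1 : sNormA A x' = 1 := by rw [sNormA_eqR hRsa hRR]; exact hRx'
    have hbdd : BddAbove {r | ∃ x ∈ closure (Set.range ⇑A), sNormA A x = 1 ∧ r = sNormA A (T x)} := by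
      refine ⟨cT, ?_⟩
      rintro r ⟨x, -, hx1, rfl⟩
      rw [sNormA_eqR hRsa hRR] at hx1 ⊢
      calc ‖R (T x)‖ ≤ cT * ‖R x‖ := hcT x
        _ = cT := by rw [hx1, mul_one]
    have hle : sNormA A (T x') ≤ opNormA A T :=
      le_csSup hbdd ⟨x', hx'cl, hsN1, rfl⟩
    rw [sNormA_eqR hRsa hRR] at hle
    have hTx' : ‖R (T x')‖ = ‖R v₁‖⁻¹ * ‖R (T v₁)‖ := by
      rw [hx', map_smul, map_smul, norm_smul, Complex.norm_real, Real.norm_eq_abs,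
        abs_of_nonneg (inv_nonneg.mpr (norm_nonneg _))]
    calc ‖R (T v)‖ ≤ ‖R (T v₁)‖ := hTv
      _ = ‖R v₁‖ * (‖R v₁‖⁻¹ * ‖R (T v₁)‖) := by field_simp
      _ = ‖R v₁‖ * ‖R (T x')‖ := by rw [hTx']
      _ ≤ ‖R v₁‖ * opNormA A T := by
          exact mul_le_mul_of_nonneg_left hle (norm_nonneg _)
      _ = opNormA A T * ‖R v‖ := by rw [hRv]; ring

include hA hRsa hRR in
lemma sharp_bound {T Ts : H →L[ℂ] H} (hTs1 : A ∘L Ts = adjoint T ∘L A)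
    (hopT : ∀ v, ‖R (T v)‖ ≤ opNormA A T * ‖R v‖) (v : H) :
    ‖R (Ts v)‖ ≤ opNormA A T * ‖R v‖ := by
  have h3 : ‖R (Ts v)‖ ^ 2 ≤ ‖R v‖ * (opNormA A T * ‖R (Ts v)‖) := by
    have h2 : (inner ℂ (A (Ts v)) (Ts v) : ℂ) = inner ℂ (R v) (R (T (Ts v))) := by
      calc (inner ℂ (A (Ts v)) (Ts v) : ℂ) = inner ℂ ((A ∘L Ts) v) (Ts v) := rfl
        _ = inner ℂ (adjoint T (A v)) (Ts v) := by rw [hTs1]; rfl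
        _ = inner ℂ (A v) (T (Ts v)) := adjoint_inner_left _ _ _
        _ = inner ℂ (R v) (R (T (Ts v))) := innerAR hRsa hRR _ _
    calc ‖R (Ts v)‖ ^ 2 = (inner ℂ (A (Ts v)) (Ts v) : ℂ).re := normRsq hRsa hRR _
      _ = (inner ℂ (R v) (R (T (Ts v))) : ℂ).re := by rw [h2]
      _ ≤ ‖(inner ℂ (R v) (R (T (Ts v))) : ℂ)‖ := Complex.re_le_norm _
      _ ≤ ‖R v‖ * ‖R (T (Ts v))‖ := norm_inner_le_norm _ _
      _ ≤ ‖R v‖ * (opNormA A T * ‖R (Ts v)‖) :=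
          mul_le_mul_of_nonneg_left (hopT (Ts v)) (norm_nonneg _)
  by_cases h0 : ‖R (Ts v)‖ = 0
  · rw [h0]
    exact mul_nonneg (opNormA_nonneg A T) (norm_nonneg _)
  · have hpos : 0 < ‖R (Ts v)‖ := lt_of_le_of_ne (norm_nonneg _) (Ne.symm h0)
    nlinarith

end RA

lemma blk2_fst (X Y Z W : H →L[ℂ] H) (u : WithLp 2 (H × H)) :
    (blk2 X Y Z W u).fst = X u.fst + Y u.snd := rfl
lemma blk2_snd (X Y Z W : H →L[ℂ] H) (u : WithLp 2 (H × H)) :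
    (blk2 X Y Z W u).snd = Z u.fst + W u.snd := rfl

end Stmt6Aux

set_option synthInstance.maxHeartbeats 1000000 in
set_option maxHeartbeats 2000000 in
theorem stmt6 {H : Type*} [NormedAddCommGroup H] [InnerProductSpace ℂ H] [CompleteSpace H]
    (A : H →L[ℂ] H) (hA : A.IsPositive)
    (T S X Y Ts Ss : H →L[ℂ] H)
    (hT : memBA A T) (hS : memBA A S) (hX : memBA A X) (hY : memBA A Y)
    (hTs : IsSharpA A T Ts) (hSs : IsSharpA A S Ss) :
    wA A (T ∘L X ∘L Ss + S ∘L Y ∘L Ts) ≤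
        2 * opNormA A T * opNormA A S * wA (blk2 A 0 0 A) (blk2 0 X Y 0) ∧
      wA A (T ∘L X ∘L Ss - S ∘L Y ∘L Ts) ≤
        2 * opNormA A T * opNormA A S * wA (blk2 A 0 0 A) (blk2 0 X Y 0) := by
  have h0 : (0 : H →L[ℂ] H) ≤ A := (ContinuousLinearMap.nonneg_iff_isPositive A).mpr hA
  set R : H →L[ℂ] H := CFC.sqrt A with hRdef
  have hR2 : R ^ 2 = A := CFC.sq_sqrt A h0
  have hRpos : (0 : H →L[ℂ] H) ≤ R := CFC.sqrt_nonneg A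
  have hRsa : IsSelfAdjoint R :=
    ((ContinuousLinearMap.nonneg_iff_isPositive R).mp hRpos).isSelfAdjoint
  have hRR : ∀ x, R (R x) = A x := by
    intro x
    have : (R * R) x = A x := by rw [← sq, hR2]
    simpa [ContinuousLinearMap.mul_apply] using this
  have hAsym : ∀ u w : H, (inner ℂ (A u) w : ℂ) = inner ℂ u (A w) := by
    intro u w
    conv_lhs => rw [← hA.isSelfAdjoint.adjoint_eq]
    exact adjoint_inner_left _ _ _
  obtain ⟨cX, hcX0, hcX⟩ := memBA_bound hA hRsa hRR hX
  obtain ⟨cY, hcY0, hcY⟩ := memBA_bound hA hRsa hRR hY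
  obtain ⟨cT, hcT0, hcT⟩ := memBA_bound hA hRsa hRR hT
  obtain ⟨cS, hcS0, hcS⟩ := memBA_bound hA hRsa hRR hS
  have hopT : ∀ v, ‖R (T v)‖ ≤ opNormA A T * ‖R v‖ := opN_bound hA hRsa hRR hcT0 hcT
  have hopS : ∀ v, ‖R (S v)‖ ≤ opNormA A S * ‖R v‖ := opN_bound hA hRsa hRR hcS0 hcS
  have hopTs : ∀ v, ‖R (Ts v)‖ ≤ opNormA A T * ‖R v‖ :=
    sharp_bound hA hRsa hRR hTs.1 hopT
  have hopSs : ∀ v, ‖R (Ss v)‖ ≤ opNormA A S * ‖R v‖ :=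
    sharp_bound hA hRsa hRR hSs.1 hopS
  set 𝔸 : WithLp 2 (H × H) →L[ℂ] WithLp 2 (H × H) := blk2 A 0 0 A with h𝔸
  set M : WithLp 2 (H × H) →L[ℂ] WithLp 2 (H × H) := blk2 0 X Y 0 with hM
  -- numerical radius nonneg
  have hw0 : 0 ≤ wA 𝔸 M :=
    Real.sSup_nonneg (by rintro r ⟨x, -, rfl⟩; exact norm_nonneg _)
  have hopT0 : 0 ≤ opNormA A T := opNormA_nonneg A T
  have hopS0 : 0 ≤ opNormA A S := opNormA_nonneg A S
  have hRHS0 : 0 ≤ 2 * opNormA A T * opNormA A S * wA 𝔸 M := by positivity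
  -- value of sInnerA 𝔸 (M u) u
  have hMval : ∀ u : WithLp 2 (H × H),
      sInnerA 𝔸 (M u) u = inner ℂ (A (X u.snd)) u.fst + inner ℂ (A (Y u.fst)) u.snd := by
    intro u
    show (inner ℂ (𝔸 (M u)) u : ℂ) = _
    rw [WithLp.prod_inner_apply]; simp only [WithLp.ofLp_fst, WithLp.ofLp_snd]
    have h1 : (𝔸 (M u)).fst = A (X u.snd) := by
      rw [h𝔸, blk2_fst, hM, blk2_fst, blk2_snd]
      simp
    have h2 : (𝔸 (M u)).snd = A (Y u.fst) := by
      rw [h𝔸, blk2_snd, hM, blk2_fst, blk2_snd]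
      simp
    rw [h1, h2]
  -- seminorm of u
  have hMnorm : ∀ u : WithLp 2 (H × H),
      sNormA 𝔸 u = Real.sqrt (‖R u.fst‖ ^ 2 + ‖R u.snd‖ ^ 2) := by
    intro u
    unfold sNormA sInnerA
    congr 1
    rw [WithLp.prod_inner_apply]; simp only [WithLp.ofLp_fst, WithLp.ofLp_snd]
    have h1 : (𝔸 u).fst = A u.fst := by rw [h𝔸, blk2_fst]; simp
    have h2 : (𝔸 u).snd = A u.snd := by rw [h𝔸, blk2_snd]; simp
    rw [h1, h2, Complex.add_re, ← normRsq hRsa hRR,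
      ← normRsq hRsa hRR]
  -- boundedness of the wA set for M
  have hbddM : BddAbove {r | ∃ u, sNormA 𝔸 u = 1 ∧ r = ‖sInnerA 𝔸 (M u) u‖} := by
    refine ⟨cX + cY, ?_⟩
    rintro r ⟨u, hu1, rfl⟩
    rw [hMnorm] at hu1
    have hsum : ‖R u.fst‖ ^ 2 + ‖R u.snd‖ ^ 2 = 1 := by
      have h := congrArg (fun t : ℝ => t ^ 2) hu1
      simpa [Real.sq_sqrt (by positivity : (0:ℝ) ≤ ‖R u.fst‖ ^ 2 + ‖R u.snd‖ ^ 2)] using h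
    rw [hMval]
    have e1 : (inner ℂ (A (X u.snd)) u.fst : ℂ) = inner ℂ (R (X u.snd)) (R u.fst) :=
      innerAR hRsa hRR _ _
    have e2 : (inner ℂ (A (Y u.fst)) u.snd : ℂ) = inner ℂ (R (Y u.fst)) (R u.snd) :=
      innerAR hRsa hRR _ _
    calc ‖inner ℂ (A (X u.snd)) u.fst + inner ℂ (A (Y u.fst)) u.snd‖
        ≤ ‖inner ℂ (A (X u.snd)) u.fst‖ + ‖inner ℂ (A (Y u.fst)) u.snd‖ :=
          norm_add_le _ _
      _ ≤ ‖R (X u.snd)‖ * ‖R u.fst‖ + ‖R (Y u.fst)‖ * ‖R u.snd‖ := by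
          rw [e1, e2]
          gcongr <;>
          · exact norm_inner_le_norm _ _
      _ ≤ cX * ‖R u.snd‖ * ‖R u.fst‖ + cY * ‖R u.fst‖ * ‖R u.snd‖ := by
          gcongr
          · exact hcX _
          · exact hcY _
      _ ≤ cX + cY := by
          nlinarith [norm_nonneg (R u.fst), norm_nonneg (R u.snd), hsum, hcX0, hcY0,
            sq_nonneg (‖R u.fst‖ - ‖R u.snd‖)]
  -- the central claim
  have claim : ∀ a b : H, ‖inner ℂ (A (X b)) a + inner ℂ (A (Y a)) b‖ ≤
      wA 𝔸 M * (‖R a‖ ^ 2 + ‖R b‖ ^ 2) := by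
    intro a b
    set s : ℝ := ‖R a‖ ^ 2 + ‖R b‖ ^ 2 with hs
    have hs0 : 0 ≤ s := by positivity
    by_cases hn : s = 0
    · have ha0 : R a = 0 := by
        have h1 : ‖R a‖ = 0 := by nlinarith [norm_nonneg (R a), norm_nonneg (R b), sq_nonneg ‖R a‖, sq_nonneg ‖R b‖]
        exact norm_eq_zero.mp h1
      have hb0 : R b = 0 := by
        have h1 : ‖R b‖ = 0 := by nlinarith [norm_nonneg (R a), norm_nonneg (R b), sq_nonneg ‖R a‖, sq_nonneg ‖R b‖]
        exact norm_eq_zero.mp h1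
      have e1 : (inner ℂ (A (X b)) a : ℂ) = 0 := by
        rw [innerAR hRsa hRR, ha0, inner_zero_right]
      have e2 : (inner ℂ (A (Y a)) b : ℂ) = 0 := by
        rw [innerAR hRsa hRR, hb0, inner_zero_right]
      rw [e1, e2, add_zero, norm_zero, hn, mul_zero]
    · have hspos : 0 < s := lt_of_le_of_ne hs0 (Ne.symm hn)
      set n : ℝ := Real.sqrt s with hnn
      have hnpos : 0 < n := Real.sqrt_pos.mpr hspos
      set c : ℂ := ((n⁻¹ : ℝ) : ℂ) with hc
      set u : WithLp 2 (H × H) := (WithLp.equiv 2 (H × H)).symm (c • a, c • b) with hu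
      have hufst : u.fst = c • a := rfl
      have husnd : u.snd = c • b := rfl
      have hcn : ‖c‖ = n⁻¹ := by
        rw [hc, Complex.norm_real, Real.norm_eq_abs, abs_of_nonneg (inv_nonneg.mpr hnpos.le)]
      have hnorm1 : sNormA 𝔸 u = 1 := by
        rw [hMnorm, hufst, husnd, map_smul, map_smul, norm_smul, norm_smul, hcn,
          mul_pow, mul_pow, ← mul_add, ← hs]
        rw [show (n⁻¹) ^ 2 * s = 1 by
          rw [hnn]; rw [inv_pow, Real.sq_sqrt hs0]; exact inv_mul_cancel₀ hn]
        exact Real.sqrt_one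
      have hval : sInnerA 𝔸 (M u) u = (c * c) * (inner ℂ (A (X b)) a + inner ℂ (A (Y a)) b) := by
        rw [hMval, hufst, husnd]
        have hcc : (starRingEnd ℂ) c = c := by rw [hc, Complex.conj_ofReal]
        have e1 : (inner ℂ (A (X (c • b))) (c • a) : ℂ) = (starRingEnd ℂ) c * c * inner ℂ (A (X b)) a := by
          rw [map_smul, map_smul, inner_smul_left, inner_smul_right]; ring
        have e2 : (inner ℂ (A (Y (c • a))) (c • b) : ℂ) = (starRingEnd ℂ) c * c * inner ℂ (A (Y a)) b := by
          rw [map_smul, map_smul, inner_smul_left, inner_smul_right]; ring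
        rw [e1, e2, hcc]; ring
      have hle : ‖sInnerA 𝔸 (M u) u‖ ≤ wA 𝔸 M :=
        le_csSup hbddM ⟨u, hnorm1, rfl⟩
      rw [hval, norm_mul, norm_mul] at hle
      have hac : ‖c‖ = n⁻¹ := hcn
      rw [hac] at hle
      have hn2 : n * n = s := Real.mul_self_sqrt hs0
      calc ‖inner ℂ (A (X b)) a + inner ℂ (A (Y a)) b‖
          = (n * n) * (n⁻¹ * n⁻¹ * ‖inner ℂ (A (X b)) a + inner ℂ (A (Y a)) b‖) := by
            field_simp
        _ ≤ (n * n) * wA 𝔸 M := mul_le_mul_of_nonneg_left hle (by positivity)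
        _ = wA 𝔸 M * s := by rw [hn2]; ring
  -- the main estimate, uniform in a unimodular scalar ε
  have hmain : ∀ ε : ℂ, ‖ε‖ = 1 → ∀ x : H, sNormA A x = 1 →
      ‖(starRingEnd ℂ) ε * inner ℂ (A (X (Ss x))) (Ts x)
          + ε * inner ℂ (A (Y (Ts x))) (Ss x)‖
        ≤ 2 * opNormA A T * opNormA A S * wA 𝔸 M := by
    intro ε hε x hx1
    rw [sNormA_eqR hRsa hRR] at hx1
    have hεn : ‖ε‖ = 1 := hε
    set p : H := Ts x with hp'
    set q : H := Ss x with hq'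
    have hp : ‖R p‖ ≤ opNormA A T := by
      have := hopTs x; rw [hx1, mul_one] at this; exact this
    have hq : ‖R q‖ ≤ opNormA A S := by
      have := hopSs x; rw [hx1, mul_one] at this; exact this
    by_cases hα : ‖R p‖ = 0
    · have hRp : R p = 0 := norm_eq_zero.mp hα
      have eP : (inner ℂ (A (X q)) p : ℂ) = 0 := by
        rw [innerAR hRsa hRR, hRp, inner_zero_right]
      have eQ : (inner ℂ (A (Y p)) q : ℂ) = 0 := by
        have h1 : ‖(inner ℂ (A (Y p)) q : ℂ)‖ ≤ ‖R (Y p)‖ * ‖R q‖ := by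
          rw [innerAR hRsa hRR]; exact norm_inner_le_norm _ _
        have h2 : ‖R (Y p)‖ = 0 := by
          have := hcY p; rw [hα, mul_zero] at this
          exact le_antisymm this (norm_nonneg _)
        rw [h2, zero_mul] at h1
        exact norm_eq_zero.mp (le_antisymm h1 (norm_nonneg _))
      rw [eP, eQ, mul_zero, mul_zero, add_zero, norm_zero]
      exact hRHS0
    · by_cases hβ : ‖R q‖ = 0
      · have hRq : R q = 0 := norm_eq_zero.mp hβ
        have eQ : (inner ℂ (A (Y p)) q : ℂ) = 0 := by
          rw [innerAR hRsa hRR, hRq, inner_zero_right]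
        have eP : (inner ℂ (A (X q)) p : ℂ) = 0 := by
          have h1 : ‖(inner ℂ (A (X q)) p : ℂ)‖ ≤ ‖R (X q)‖ * ‖R p‖ := by
            rw [innerAR hRsa hRR]; exact norm_inner_le_norm _ _
          have h2 : ‖R (X q)‖ = 0 := by
            have := hcX q; rw [hβ, mul_zero] at this
            exact le_antisymm this (norm_nonneg _)
          rw [h2, zero_mul] at h1
          exact norm_eq_zero.mp (le_antisymm h1 (norm_nonneg _))
        rw [eP, eQ, mul_zero, mul_zero, add_zero, norm_zero]
        exact hRHS0
      · have hαpos : 0 < ‖R p‖ := lt_of_le_of_ne (norm_nonneg _) (Ne.symm hα)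
        have hβpos : 0 < ‖R q‖ := lt_of_le_of_ne (norm_nonneg _) (Ne.symm hβ)
        set t : ℝ := Real.sqrt (‖R q‖ / ‖R p‖) with ht'
        have htpos : 0 < t := Real.sqrt_pos.mpr (div_pos hβpos hαpos)
        have ht2 : t ^ 2 = ‖R q‖ / ‖R p‖ := Real.sq_sqrt (le_of_lt (div_pos hβpos hαpos))
        set ca : ℂ := ((t : ℝ) : ℂ) with hca
        set cb : ℂ := ε * ((t⁻¹ : ℝ) : ℂ) with hcb
        have h := claim (ca • p) (cb • q)
        have e1 : (inner ℂ (A (X (cb • q))) (ca • p) : ℂ)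
            = (starRingEnd ℂ) ε * inner ℂ (A (X q)) p := by
          rw [map_smul, map_smul, inner_smul_left, inner_smul_right, hcb, hca, map_mul,
            Complex.conj_ofReal]
          have : ((t⁻¹ : ℝ) : ℂ) * ((t : ℝ) : ℂ) = 1 := by
            rw [← Complex.ofReal_mul, inv_mul_cancel₀ htpos.ne', Complex.ofReal_one]
          calc (starRingEnd ℂ) ε * ((t⁻¹ : ℝ) : ℂ) * (((t : ℝ) : ℂ) * inner ℂ (A (X q)) p)
              = (starRingEnd ℂ) ε * ((((t⁻¹ : ℝ) : ℂ) * ((t : ℝ) : ℂ)) * inner ℂ (A (X q)) p) := by ring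
            _ = (starRingEnd ℂ) ε * inner ℂ (A (X q)) p := by rw [this, one_mul]
        have e2 : (inner ℂ (A (Y (ca • p))) (cb • q) : ℂ) = ε * inner ℂ (A (Y p)) q := by
          rw [map_smul, map_smul, inner_smul_left, inner_smul_right, hcb, hca,
            Complex.conj_ofReal]
          have : ((t : ℝ) : ℂ) * ((t⁻¹ : ℝ) : ℂ) = 1 := by
            rw [← Complex.ofReal_mul, mul_inv_cancel₀ htpos.ne', Complex.ofReal_one]
          calc ((t : ℝ) : ℂ) * (ε * ((t⁻¹ : ℝ) : ℂ) * inner ℂ (A (Y p)) q)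
              = ((t : ℝ) : ℂ) * ((t⁻¹ : ℝ) : ℂ) * ε * inner ℂ (A (Y p)) q := by ring
            _ = ε * inner ℂ (A (Y p)) q := by rw [this, one_mul]
        have hna : ‖R (ca • p)‖ = t * ‖R p‖ := by
          rw [map_smul, norm_smul, hca, Complex.norm_real, Real.norm_eq_abs,
            abs_of_nonneg htpos.le]
        have hnb : ‖R (cb • q)‖ = t⁻¹ * ‖R q‖ := by
          rw [map_smul, norm_smul, hcb, norm_mul, hεn, one_mul, Complex.norm_real,
            Real.norm_eq_abs, abs_of_nonneg (inv_nonneg.mpr htpos.le)]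
        rw [e1, e2, hna, hnb] at h
        have e3 : (t * ‖R p‖) ^ 2 + (t⁻¹ * ‖R q‖) ^ 2 = 2 * (‖R p‖ * ‖R q‖) := by
          rw [mul_pow, mul_pow, inv_pow, ht2]
          field_simp
          ring
        rw [e3] at h
        calc ‖(starRingEnd ℂ) ε * inner ℂ (A (X q)) p + ε * inner ℂ (A (Y p)) q‖
            ≤ wA 𝔸 M * (2 * (‖R p‖ * ‖R q‖)) := h
          _ ≤ 2 * opNormA A T * opNormA A S * wA 𝔸 M := by
              nlinarith [mul_le_mul hp hq (norm_nonneg (R q)) hopT0, hw0,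
                mul_nonneg (norm_nonneg (R p)) (norm_nonneg (R q))]
  -- relating the operator values to P and Q
  have hPQ : ∀ x : H, (inner ℂ (A (T (X (Ss x)))) x : ℂ) = inner ℂ (A (X (Ss x))) (Ts x) := by
    intro x
    calc (inner ℂ (A (T (X (Ss x)))) x : ℂ) = inner ℂ (T (X (Ss x))) (A x) := hAsym _ _
      _ = inner ℂ (X (Ss x)) (adjoint T (A x)) := (adjoint_inner_right _ _ _).symm
      _ = inner ℂ (X (Ss x)) ((adjoint T ∘L A) x) := rfl
      _ = inner ℂ (X (Ss x)) ((A ∘L Ts) x) := by rw [← hTs.1]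
      _ = inner ℂ (X (Ss x)) (A (Ts x)) := rfl
      _ = inner ℂ (A (X (Ss x))) (Ts x) := (hAsym _ _).symm
  have hPQ2 : ∀ x : H, (inner ℂ (A (S (Y (Ts x)))) x : ℂ) = inner ℂ (A (Y (Ts x))) (Ss x) := by
    intro x
    calc (inner ℂ (A (S (Y (Ts x)))) x : ℂ) = inner ℂ (S (Y (Ts x))) (A x) := hAsym _ _
      _ = inner ℂ (Y (Ts x)) (adjoint S (A x)) := (adjoint_inner_right _ _ _).symm
      _ = inner ℂ (Y (Ts x)) ((adjoint S ∘L A) x) := rfl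
      _ = inner ℂ (Y (Ts x)) ((A ∘L Ss) x) := by rw [← hSs.1]
      _ = inner ℂ (Y (Ts x)) (A (Ss x)) := rfl
      _ = inner ℂ (A (Y (Ts x))) (Ss x) := (hAsym _ _).symm
  constructor
  · apply Real.sSup_le _ hRHS0
    rintro r ⟨x, hx1, rfl⟩
    have hv : sInnerA A ((T ∘L X ∘L Ss + S ∘L Y ∘L Ts) x) x
        = inner ℂ (A (X (Ss x))) (Ts x) + inner ℂ (A (Y (Ts x))) (Ss x) := by
      unfold sInnerA
      have hxx : (T ∘L X ∘L Ss + S ∘L Y ∘L Ts) x = T (X (Ss x)) + S (Y (Ts x)) := rfl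
      rw [hxx, map_add, inner_add_left, hPQ x, hPQ2 x]
    rw [hv]
    have h := hmain 1 (by simp) x hx1
    simpa using h
  · apply Real.sSup_le _ hRHS0
    rintro r ⟨x, hx1, rfl⟩
    have hv : sInnerA A ((T ∘L X ∘L Ss - S ∘L Y ∘L Ts) x) x
        = inner ℂ (A (X (Ss x))) (Ts x) - inner ℂ (A (Y (Ts x))) (Ss x) := by
      unfold sInnerA
      have hxx : (T ∘L X ∘L Ss - S ∘L Y ∘L Ts) x = T (X (Ss x)) - S (Y (Ts x)) := rfl
      rw [hxx, map_sub, inner_sub_left, hPQ x, hPQ2 x]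
    rw [hv]
    have h := hmain Complex.I (by simp) x hx1
    have heq : (starRingEnd ℂ) Complex.I * inner ℂ (A (X (Ss x))) (Ts x)
        + Complex.I * inner ℂ (A (Y (Ts x))) (Ss x)
        = Complex.I * (inner ℂ (A (Y (Ts x))) (Ss x) - inner ℂ (A (X (Ss x))) (Ts x)) := by
      rw [Complex.conj_I]; ring
    rw [heq, norm_mul, Complex.norm_I, one_mul, norm_sub_rev] at h
    exact h
end
end

section
/- Let Q, S ∈ B_A(H). Then w_A(Q S^{#_A} + S Q) ≤ 2 ‖S‖_A · w_A(Q) and w_A(Q S^{#_A} − S Q) ≤ 2 ‖S‖_A · w_A(Q). -/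
noncomputable section

open ContinuousLinearMap

set_option linter.unusedSectionVars false


namespace Stmt7Aux

variable {H : Type*} [NormedAddCommGroup H] [InnerProductSpace ℂ H] [CompleteSpace H]
variable {A : H →L[ℂ] H}

lemma ip_re_nonneg (hA : A.IsPositive) (x : H) : 0 ≤ (sInnerA A x x).re :=
  hA.re_inner_nonneg_left x

lemma nA_nonneg (x : H) : 0 ≤ sNormA A x := Real.sqrt_nonneg _

lemma sq_nA (hA : A.IsPositive) (x : H) : sNormA A x ^ 2 = (sInnerA A x x).re :=
  Real.sq_sqrt (ip_re_nonneg hA x)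

lemma ip_conj (hA : A.IsPositive) (x y : H) :
    (starRingEnd ℂ) (sInnerA A y x) = sInnerA A x y := by
  have hsa : ContinuousLinearMap.adjoint A = A := hA.isSelfAdjoint
  calc (starRingEnd ℂ) (sInnerA A y x) = inner ℂ x (A y) :=
        inner_conj_symm x (A y)
    _ = inner ℂ (A x) y := by
        conv_lhs => rw [← hsa, adjoint_inner_right]
    _ = sInnerA A x y := rfl

lemma ip_add_left (x y z : H) : sInnerA A (x + y) z = sInnerA A x z + sInnerA A y z := by
  simp [sInnerA, inner_add_left]

lemma ip_add_right (x y z : H) : sInnerA A x (y + z) = sInnerA A x y + sInnerA A x z := by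
  simp [sInnerA, inner_add_right]

lemma ip_sub_left (x y z : H) : sInnerA A (x - y) z = sInnerA A x z - sInnerA A y z := by
  simp [sInnerA, inner_sub_left]

lemma ip_sub_right (x y z : H) : sInnerA A x (y - z) = sInnerA A x y - sInnerA A x z := by
  simp [sInnerA, inner_sub_right]

lemma ip_smul_left (a : ℂ) (x y : H) :
    sInnerA A (a • x) y = (starRingEnd ℂ) a * sInnerA A x y := by
  simp [sInnerA, inner_smul_left, mul_comm]

lemma ip_smul_right (a : ℂ) (x y : H) : sInnerA A x (a • y) = a * sInnerA A x y := by
  simp [sInnerA, inner_smul_right]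

/-- The pre-inner-product core induced by a positive operator. -/
def coreA (hA : A.IsPositive) : PreInnerProductSpace.Core ℂ H where
  inner x y := sInnerA A x y
  conj_inner_symm x y := ip_conj hA x y
  re_inner_nonneg x := ip_re_nonneg hA x
  add_left := ip_add_left
  smul_left x y r := ip_smul_left r x y

lemma abs_ip_le (hA : A.IsPositive) (x y : H) :
    ‖sInnerA A x y‖ ≤ sNormA A x * sNormA A y := by
  have h := @InnerProductSpace.Core.inner_mul_inner_self_le ℂ H _ _ _ (coreA hA) x y
  have hsymm : ‖sInnerA A y x‖ = ‖sInnerA A x y‖ := by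
    rw [← ip_conj hA x y, RCLike.norm_conj]
  have h2 : ‖sInnerA A x y‖ ^ 2 ≤ (sNormA A x * sNormA A y) ^ 2 := by
    have hx := sq_nA hA x
    have hy := sq_nA hA y
    have : ‖sInnerA A x y‖ * ‖sInnerA A y x‖ ≤ (sInnerA A x x).re * (sInnerA A y y).re := h
    rw [hsymm] at this
    nlinarith [nA_nonneg (A := A) x, nA_nonneg (A := A) y]
  have hb : 0 ≤ sNormA A x * sNormA A y := mul_nonneg (nA_nonneg x) (nA_nonneg y)
  nlinarith [norm_nonneg (sInnerA A x y)]


lemma le_of_sq_le_sq {a b : ℝ} (ha : 0 ≤ a) (hb : 0 ≤ b) (h : a ^ 2 ≤ b ^ 2) : a ≤ b := by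
  nlinarith

lemma nA_smul (hA : A.IsPositive) (a : ℂ) (x : H) :
    sNormA A (a • x) = ‖a‖ * sNormA A x := by
  have h1 : sInnerA A (a • x) (a • x) = ((‖a‖ : ℂ) ^ 2) * sInnerA A x x := by
    rw [ip_smul_left, ip_smul_right, ← mul_assoc]
    congr 1
    rw [mul_comm, Complex.mul_conj]
    norm_cast
    rw [Complex.sq_norm]
  have h2 : (sInnerA A (a • x) (a • x)).re = (‖a‖) ^ 2 * (sInnerA A x x).re := by
    rw [h1]
    have : ((‖a‖ : ℂ) ^ 2) = ((‖a‖ ^ 2 : ℝ) : ℂ) := by push_cast; ring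
    rw [this, Complex.re_ofReal_mul]
  rw [sNormA, h2, Real.sqrt_mul (sq_nonneg _), Real.sqrt_sq (norm_nonneg a)]
  rfl

lemma nA_zero : sNormA A 0 = 0 := by
  simp [sNormA, sInnerA]

lemma nA_le_norm (hA : A.IsPositive) (z : H) :
    sNormA A z ≤ Real.sqrt ‖A‖ * ‖z‖ := by
  have h1 : (sInnerA A z z).re ≤ ‖A‖ * ‖z‖ ^ 2 := by
    have : (sInnerA A z z).re ≤ ‖sInnerA A z z‖ := Complex.re_le_norm _
    have h2 : ‖sInnerA A z z‖ ≤ ‖A z‖ * ‖z‖ := norm_inner_le_norm _ _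
    have h3 : ‖A z‖ ≤ ‖A‖ * ‖z‖ := A.le_opNorm z
    nlinarith [norm_nonneg z]
  have h4 : sNormA A z ^ 2 ≤ (Real.sqrt ‖A‖ * ‖z‖) ^ 2 := by
    rw [sq_nA hA, mul_pow, Real.sq_sqrt (norm_nonneg A)]
    exact h1
  exact le_of_sq_le_sq (nA_nonneg z) (mul_nonneg (Real.sqrt_nonneg _) (norm_nonneg _)) h4

section pair

variable {T Ts : H →L[ℂ] H}

/-- From `A Ts = T* A`: shift `Ts` from left slot to `T` in right slot. -/
lemma ip_shift (h : A ∘L Ts = adjoint T ∘L A) (x y : H) :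
    sInnerA A (Ts x) y = sInnerA A x (T y) := by
  have hx : A (Ts x) = adjoint T (A x) := by
    have := DFunLike.congr_fun h x
    simpa using this
  rw [sInnerA, hx, adjoint_inner_left, sInnerA]

lemma ip_shift' (hA : A.IsPositive) (h : A ∘L Ts = adjoint T ∘L A) (x y : H) :
    sInnerA A (T x) y = sInnerA A x (Ts y) := by
  rw [← ip_conj hA (T x) y, ← ip_shift h y x, ip_conj hA]

/-- `R = Ts ∘ T` is `A`-selfadjoint. -/
lemma ip_R (hA : A.IsPositive) (h : A ∘L Ts = adjoint T ∘L A) (x y : H) :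
    sInnerA A ((Ts ∘L T) x) y = sInnerA A x ((Ts ∘L T) y) := by
  calc sInnerA A (Ts (T x)) y = sInnerA A (T x) (T y) := ip_shift h (T x) y
    _ = sInnerA A x (Ts (T y)) := ip_shift' hA h x (T y)

lemma ip_Rpow (hA : A.IsPositive) {R : H →L[ℂ] H}
    (hR : ∀ x y, sInnerA A (R x) y = sInnerA A x (R y)) (m : ℕ) (x y : H) :
    sInnerA A ((R ^ m) x) y = sInnerA A x ((R ^ m) y) := by
  induction m generalizing x y with
  | zero => simp
  | succ k ih =>
    have h1 : (R ^ (k + 1)) x = (R ^ k) (R x) := by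
      rw [pow_succ]; rfl
    have h2 : (R ^ (k + 1)) y = R ((R ^ k) y) := by
      rw [pow_succ']; rfl
    rw [h1, h2, ih (R x) y, hR]

lemma nA_R_le (hA : A.IsPositive) {R : H →L[ℂ] H}
    (hR : ∀ x y, sInnerA A (R x) y = sInnerA A x (R y)) (x : H) :
    sNormA A (R x) ≤ ‖R‖ * sNormA A x := by
  -- basic: n((R^m) x)^2 ≤ n x * n((R^(m+m)) x)
  have basic : ∀ m : ℕ, sNormA A ((R ^ m) x) ^ 2 ≤ sNormA A x * sNormA A ((R ^ (m + m)) x) := by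
    intro m
    have h1 : sInnerA A ((R ^ m) x) ((R ^ m) x) = sInnerA A x ((R ^ (m + m)) x) := by
      rw [ip_Rpow hA hR m, ← comp_apply, ← mul_def, ← pow_add]
    calc sNormA A ((R ^ m) x) ^ 2 = (sInnerA A ((R ^ m) x) ((R ^ m) x)).re := sq_nA hA _
      _ = (sInnerA A x ((R ^ (m + m)) x)).re := by rw [h1]
      _ ≤ ‖sInnerA A x ((R ^ (m + m)) x)‖ := Complex.re_le_norm _
      _ ≤ sNormA A x * sNormA A ((R ^ (m + m)) x) := abs_ip_le hA _ _
  -- iterated claim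
  have claim : ∀ k : ℕ, sNormA A (R x) ^ (2 ^ k) ≤
      sNormA A ((R ^ (2 ^ k)) x) * sNormA A x ^ (2 ^ k - 1) := by
    intro k
    induction k with
    | zero => simp
    | succ k ih =>
      have h1 : (1:ℕ) ≤ 2 ^ k := Nat.one_le_two_pow
      have e1 : (2:ℕ) ^ (k + 1) = 2 ^ k * 2 := by ring
      have e2 : sNormA A (R x) ^ (2 ^ (k + 1)) = (sNormA A (R x) ^ (2 ^ k)) ^ 2 := by
        rw [e1, pow_mul]
      have step1 : (sNormA A (R x) ^ (2 ^ k)) ^ 2 ≤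
          (sNormA A ((R ^ (2 ^ k)) x) * sNormA A x ^ (2 ^ k - 1)) ^ 2 :=
        pow_le_pow_left₀ (pow_nonneg (nA_nonneg _) _) ih 2
      have step2 : (sNormA A ((R ^ (2 ^ k)) x)) ^ 2 ≤
          sNormA A x * sNormA A ((R ^ (2 ^ (k + 1))) x) := by
        have := basic (2 ^ k)
        have e3 : 2 ^ k + 2 ^ k = 2 ^ (k + 1) := by ring
        rwa [e3] at this
      calc sNormA A (R x) ^ (2 ^ (k + 1))
          = (sNormA A (R x) ^ (2 ^ k)) ^ 2 := e2
        _ ≤ (sNormA A ((R ^ (2 ^ k)) x)) ^ 2 * (sNormA A x ^ (2 ^ k - 1)) ^ 2 := by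
            rw [← mul_pow]; exact step1
        _ ≤ (sNormA A x * sNormA A ((R ^ (2 ^ (k + 1))) x)) * (sNormA A x ^ (2 ^ k - 1)) ^ 2 :=
            mul_le_mul_of_nonneg_right step2 (pow_nonneg (pow_nonneg (nA_nonneg _) _) _)
        _ = sNormA A ((R ^ (2 ^ (k + 1))) x) * sNormA A x ^ (2 ^ (k + 1) - 1) := by
            rw [← pow_mul]
            have e5 : (2:ℕ) ^ (k + 1) = 2 ^ k * 2 := by ring
            have e4 : 2 ^ (k + 1) - 1 = 1 + (2 ^ k - 1) * 2 := by omega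
            rw [e4, pow_add, pow_one]
            ring
  -- conclude
  by_cases hx : sNormA A x = 0
  · have h2 : sNormA A (R x) ^ 2 ≤ 0 := by
      have := claim 1
      simp only [pow_one, hx] at this
      simpa using this
    have h3 : sNormA A (R x) = 0 := by nlinarith [nA_nonneg (A := A) (R x)]
    rw [h3, hx, mul_zero]
  · have hx' : 0 < sNormA A x := lt_of_le_of_ne (nA_nonneg x) (Ne.symm hx)
    by_contra hcon
    push_neg at hcon
    by_cases hR0 : R = 0
    · rw [hR0] at hcon
      simp [nA_zero] at hcon
    · have hRn : 0 < ‖R‖ := norm_pos_iff.mpr hR0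
      set a := ‖R‖ * sNormA A x with ha
      have hapos : 0 < a := mul_pos hRn hx'
      set b := sNormA A (R x) with hb
      have hc1 : 1 < b / a := (one_lt_div hapos).mpr hcon
      set M := Real.sqrt ‖A‖ * ‖x‖ / sNormA A x with hM
      have key : ∀ k : ℕ, (b / a) ^ (2 ^ k) ≤ M := by
        intro k
        have hone : (1:ℕ) ≤ 2 ^ k := Nat.one_le_two_pow
        have h2 : sNormA A ((R ^ (2 ^ k)) x) ≤ Real.sqrt ‖A‖ * (‖R‖ ^ (2 ^ k) * ‖x‖) := by
          have hn := nA_le_norm hA ((R ^ (2 ^ k)) x)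
          have hb1 : ‖(R ^ (2 ^ k)) x‖ ≤ ‖R ^ (2 ^ k)‖ * ‖x‖ := le_opNorm _ _
          have hc2 : ‖R ^ (2 ^ k)‖ ≤ ‖R‖ ^ (2 ^ k) := norm_pow_le' R (Nat.two_pow_pos k)
          have hsq : (0:ℝ) ≤ Real.sqrt ‖A‖ := Real.sqrt_nonneg _
          calc sNormA A ((R ^ (2 ^ k)) x) ≤ Real.sqrt ‖A‖ * ‖(R ^ (2 ^ k)) x‖ := hn
            _ ≤ Real.sqrt ‖A‖ * (‖R ^ (2 ^ k)‖ * ‖x‖) := mul_le_mul_of_nonneg_left hb1 hsq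
            _ ≤ Real.sqrt ‖A‖ * (‖R‖ ^ (2 ^ k) * ‖x‖) := by
                have := mul_le_mul_of_nonneg_right hc2 (norm_nonneg x)
                exact mul_le_mul_of_nonneg_left this hsq
        have e : M * a ^ (2 ^ k) =
            Real.sqrt ‖A‖ * ‖x‖ * (‖R‖ ^ (2 ^ k) * sNormA A x ^ (2 ^ k - 1)) := by
          have e2 : sNormA A x ^ (2 ^ k) = sNormA A x ^ (2 ^ k - 1) * sNormA A x := by
            rw [← pow_succ]
            congr 1
            omega
          rw [hM, ha, mul_pow, e2]
          field_simp
        have chain : b ^ (2 ^ k) ≤ M * a ^ (2 ^ k) := by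
          calc b ^ (2 ^ k) ≤ sNormA A ((R ^ (2 ^ k)) x) * sNormA A x ^ (2 ^ k - 1) := claim k
            _ ≤ (Real.sqrt ‖A‖ * (‖R‖ ^ (2 ^ k) * ‖x‖)) * sNormA A x ^ (2 ^ k - 1) :=
                mul_le_mul_of_nonneg_right h2 (pow_nonneg (nA_nonneg _) _)
            _ = M * a ^ (2 ^ k) := by rw [e]; ring
        rw [div_pow, div_le_iff₀ (pow_pos hapos _)]
        exact chain
      obtain ⟨k, hk⟩ := pow_unbounded_of_one_lt M hc1
      have h5 : (b / a) ^ k ≤ (b / a) ^ (2 ^ k) :=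
        pow_le_pow_right₀ (le_of_lt hc1) (Nat.lt_two_pow_self (n := k)).le
      exact absurd (lt_of_lt_of_le hk (h5.trans (key k))) (lt_irrefl _)

lemma nA_pair_le (hA : A.IsPositive) (h : A ∘L Ts = adjoint T ∘L A) (x : H) :
    sNormA A (T x) ≤ Real.sqrt ‖Ts ∘L T‖ * sNormA A x := by
  have hR := ip_R hA h
  have h1 : sNormA A (T x) ^ 2 ≤ ‖Ts ∘L T‖ * sNormA A x ^ 2 := by
    calc sNormA A (T x) ^ 2 = (sInnerA A (T x) (T x)).re := sq_nA hA _
      _ = (sInnerA A x ((Ts ∘L T) x)).re := by rw [comp_apply, ip_shift' hA h]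
      _ ≤ ‖sInnerA A x ((Ts ∘L T) x)‖ := Complex.re_le_norm _
      _ ≤ sNormA A x * sNormA A ((Ts ∘L T) x) := abs_ip_le hA _ _
      _ ≤ sNormA A x * (‖Ts ∘L T‖ * sNormA A x) :=
          mul_le_mul_of_nonneg_left (nA_R_le hA hR x) (nA_nonneg _)
      _ = ‖Ts ∘L T‖ * sNormA A x ^ 2 := by ring
  refine le_of_sq_le_sq (nA_nonneg _) (mul_nonneg (Real.sqrt_nonneg _) (nA_nonneg _)) ?_
  rw [mul_pow, Real.sq_sqrt (norm_nonneg _)]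
  exact h1

end pair

section construct

variable {Q : H →L[ℂ] H}

/-- From `R(Q* A) ⊆ R(A)` construct a bounded `Qs` with `A Qs = Q* A`
via the closed graph theorem. -/
lemma exists_sharp (hQ : ∀ x : H, ∃ y, A y = (adjoint Q) (A x)) :
    ∃ Qs : H →L[ℂ] H, A ∘L Qs = adjoint Q ∘L A := by
  classical
  set K : Submodule ℂ H := LinearMap.ker (A : H →ₗ[ℂ] H) with hK
  have hKc : IsClosed (K : Set H) := isClosed_ker A
  haveI : CompleteSpace K := hKc.completeSpace_coe
  have memK : ∀ z : H, z ∈ K ↔ A z = 0 := fun z => LinearMap.mem_ker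
  have spec : ∀ x : H, ((Kᗮ.orthogonalProjectionOnto (hQ x).choose : H) ∈ Kᗮ) ∧
      A ((Kᗮ.orthogonalProjectionOnto (hQ x).choose : H)) = (adjoint Q) (A x) := by
    intro x
    constructor
    · exact (Kᗮ.orthogonalProjectionOnto (hQ x).choose).2
    · have hsub : (hQ x).choose - (Kᗮ.orthogonalProjectionOnto (hQ x).choose : H) ∈ Kᗮᗮ :=
        by have := Kᗮ.sub_starProjection_mem_orthogonal (hQ x).choose; rwa [Submodule.starProjection_apply] at this
      rw [Submodule.orthogonal_orthogonal] at hsub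
      have h0 : A ((hQ x).choose - (Kᗮ.orthogonalProjectionOnto (hQ x).choose : H)) = 0 :=
        (memK _).mp hsub
      rw [map_sub, sub_eq_zero] at h0
      rw [← h0, (hQ x).choose_spec]
  set g0 : H → H := fun x => (Kᗮ.orthogonalProjectionOnto (hQ x).choose : H) with hg0
  have uniq : ∀ (x z : H), z ∈ Kᗮ → A z = (adjoint Q) (A x) → z = g0 x := by
    intro x z hz hAz
    have h1 : z - g0 x ∈ Kᗮ := Submodule.sub_mem _ hz (spec x).1
    have h2 : z - g0 x ∈ K := by
      rw [memK, map_sub, hAz, (spec x).2, sub_self]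
    have h3 : z - g0 x = 0 := by
      have h4 := (Submodule.mem_orthogonal K (z - g0 x)).mp h1 _ h2
      exact inner_self_eq_zero.mp h4
    rw [sub_eq_zero] at h3
    exact h3
  have gadd : ∀ x y, g0 (x + y) = g0 x + g0 y := by
    intro x y
    refine (uniq (x + y) (g0 x + g0 y) (Submodule.add_mem _ (spec x).1 (spec y).1) ?_).symm
    rw [map_add, (spec x).2, (spec y).2, map_add, map_add]
  have gsmul : ∀ (a : ℂ) x, g0 (a • x) = a • g0 x := by
    intro a x
    refine (uniq (a • x) (a • g0 x) (Submodule.smul_mem _ _ (spec x).1) ?_).symm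
    rw [map_smul, (spec x).2, map_smul, map_smul]
  set g : H →ₗ[ℂ] H :=
    { toFun := g0, map_add' := gadd, map_smul' := gsmul } with hg
  have hgraph : (g.graph : Set (H × H)) =
      {p : H × H | p.2 ∈ Kᗮ ∧ A p.2 = (adjoint Q) (A p.1)} := by
    ext p
    simp only [SetLike.mem_coe, LinearMap.mem_graph_iff, Set.mem_setOf_eq]
    constructor
    · rintro hp
      rw [hp]
      exact ⟨(spec p.1).1, (spec p.1).2⟩
    · rintro ⟨h1, h2⟩
      exact uniq p.1 p.2 h1 h2
  have hclosed : IsClosed (g.graph : Set (H × H)) := by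
    rw [hgraph]
    have h1 : IsClosed {p : H × H | p.2 ∈ Kᗮ} :=
      K.isClosed_orthogonal.preimage continuous_snd
    have h2 : IsClosed {p : H × H | A p.2 = (adjoint Q) (A p.1)} :=
      isClosed_eq (A.continuous.comp continuous_snd)
        ((adjoint Q).continuous.comp (A.continuous.comp continuous_fst))
    exact h1.inter h2
  have hcont : Continuous g := g.continuous_of_isClosed_graph hclosed
  refine ⟨⟨g, hcont⟩, ?_⟩
  ext x
  exact (spec x).2

end construct

section main

variable {Q S Ss T : H →L[ℂ] H}

lemma wA_nonneg : 0 ≤ wA A T := by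
  apply Real.sSup_nonneg
  rintro r ⟨x, hx, rfl⟩
  exact norm_nonneg _

lemma opNormA_nonneg : 0 ≤ opNormA A T := by
  apply Real.sSup_nonneg
  rintro r ⟨x, hx1, hx2, rfl⟩
  exact nA_nonneg _

lemma bddAbove_opNormA (hA : A.IsPositive) (h : A ∘L Ss = adjoint S ∘L A) :
    BddAbove {r | ∃ x ∈ closure (Set.range A), sNormA A x = 1 ∧ r = sNormA A (S x)} := by
  refine ⟨Real.sqrt ‖Ss ∘L S‖, ?_⟩
  rintro r ⟨x, hx1, hx2, rfl⟩
  have := nA_pair_le hA h x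
  rw [hx2, mul_one] at this
  exact this

lemma S_on_closure (hA : A.IsPositive) (h : A ∘L Ss = adjoint S ∘L A)
    {w : H} (hw : w ∈ closure (Set.range A)) :
    sNormA A (S w) ≤ opNormA A S * sNormA A w := by
  by_cases h0 : sNormA A w = 0
  · have h1 : sNormA A (S w) ^ 2 ≤ 0 := by
      calc sNormA A (S w) ^ 2 = (sInnerA A (S w) (S w)).re := sq_nA hA _
        _ = (sInnerA A w (Ss (S w))).re := by rw [ip_shift' hA h]
        _ ≤ ‖sInnerA A w (Ss (S w))‖ := Complex.re_le_norm _
        _ ≤ sNormA A w * sNormA A (Ss (S w)) := abs_ip_le hA _ _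
        _ = 0 := by rw [h0, zero_mul]
    have h2 : sNormA A (S w) = 0 := by nlinarith [nA_nonneg (A := A) (S w)]
    rw [h2, h0, mul_zero]
  · have hc : 0 < sNormA A w := lt_of_le_of_ne (nA_nonneg _) (Ne.symm h0)
    set c := sNormA A w with hcdef
    set w' := ((c : ℂ))⁻¹ • w with hw'
    have habs : ‖((c : ℂ))⁻¹‖ = c⁻¹ := by
      rw [norm_inv, Complex.norm_real, Real.norm_eq_abs, abs_of_pos hc]
    have hw'mem : w' ∈ closure (Set.range A) := by
      have hsub : closure (Set.range A) =
          ((LinearMap.range (A : H →ₗ[ℂ] H)).topologicalClosure : Set H) := by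
        rw [Submodule.topologicalClosure_coe, LinearMap.coe_range]; rfl
      rw [hsub] at hw ⊢
      exact Submodule.smul_mem _ _ hw
    have hw'norm : sNormA A w' = 1 := by
      rw [hw', nA_smul hA, habs, ← hcdef, inv_mul_cancel₀ (ne_of_gt hc)]
    have hmem : sNormA A (S w') ∈
        {r | ∃ x ∈ closure (Set.range A), sNormA A x = 1 ∧ r = sNormA A (S x)} :=
      ⟨w', hw'mem, hw'norm, rfl⟩
    have hle : sNormA A (S w') ≤ opNormA A S := le_csSup (bddAbove_opNormA hA h) hmem
    have hSw' : sNormA A (S w') = c⁻¹ * sNormA A (S w) := by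
      rw [hw', map_smul, nA_smul hA, habs]
    rw [hSw'] at hle
    calc sNormA A (S w) = c * (c⁻¹ * sNormA A (S w)) := by
          field_simp
      _ ≤ c * opNormA A S := mul_le_mul_of_nonneg_left hle (le_of_lt hc)
      _ = opNormA A S * c := mul_comm _ _

lemma Ss_le (hA : A.IsPositive) (h : A ∘L Ss = adjoint S ∘L A)
    (hrange : Set.range Ss ⊆ closure (Set.range A)) (x : H) :
    sNormA A (Ss x) ≤ opNormA A S * sNormA A x := by
  have hmem : Ss x ∈ closure (Set.range A) := hrange ⟨x, rfl⟩
  have h1 : sNormA A (Ss x) ^ 2 ≤ (opNormA A S * sNormA A x) * sNormA A (Ss x) := by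
    calc sNormA A (Ss x) ^ 2 = (sInnerA A (Ss x) (Ss x)).re := sq_nA hA _
      _ = (sInnerA A x (S (Ss x))).re := by rw [ip_shift h]
      _ ≤ ‖sInnerA A x (S (Ss x))‖ := Complex.re_le_norm _
      _ ≤ sNormA A x * sNormA A (S (Ss x)) := abs_ip_le hA _ _
      _ ≤ sNormA A x * (opNormA A S * sNormA A (Ss x)) :=
          mul_le_mul_of_nonneg_left (S_on_closure hA h hmem) (nA_nonneg _)
      _ = (opNormA A S * sNormA A x) * sNormA A (Ss x) := by ring
  by_cases h0 : sNormA A (Ss x) = 0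
  · rw [h0]
    exact mul_nonneg opNormA_nonneg (nA_nonneg _)
  · have hpos : 0 < sNormA A (Ss x) := lt_of_le_of_ne (nA_nonneg _) (Ne.symm h0)
    exact le_of_mul_le_mul_right (by rw [← sq]; exact h1) hpos

lemma bddAbove_wA (hA : A.IsPositive) {cQ : ℝ}
    (hQb : ∀ x, sNormA A (Q x) ≤ cQ * sNormA A x) :
    BddAbove {r | ∃ x, sNormA A x = 1 ∧ r = ‖sInnerA A (Q x) x‖} := by
  refine ⟨cQ, ?_⟩
  rintro r ⟨x, hx, rfl⟩
  calc ‖sInnerA A (Q x) x‖ ≤ sNormA A (Q x) * sNormA A x := abs_ip_le hA _ _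
    _ ≤ (cQ * sNormA A x) * sNormA A x := mul_le_mul_of_nonneg_right (hQb x) (nA_nonneg _)
    _ = cQ := by rw [hx]; ring

lemma abs_ip_Q_le (hA : A.IsPositive) {cQ : ℝ}
    (hQb : ∀ x, sNormA A (Q x) ≤ cQ * sNormA A x) (z : H) :
    ‖sInnerA A (Q z) z‖ ≤ wA A Q * sNormA A z ^ 2 := by
  by_cases h0 : sNormA A z = 0
  · have h1 : ‖sInnerA A (Q z) z‖ ≤ 0 := by
      calc ‖sInnerA A (Q z) z‖ ≤ sNormA A (Q z) * sNormA A z := abs_ip_le hA _ _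
        _ = 0 := by rw [h0, mul_zero]
    rw [h0]
    simpa using h1
  · have hc : 0 < sNormA A z := lt_of_le_of_ne (nA_nonneg _) (Ne.symm h0)
    set c := sNormA A z with hcdef
    set z' := ((c : ℂ))⁻¹ • z with hz'
    have habs : ‖((c : ℂ))⁻¹‖ = c⁻¹ := by
      rw [norm_inv, Complex.norm_real, Real.norm_eq_abs, abs_of_pos hc]
    have hz'norm : sNormA A z' = 1 := by
      rw [hz', nA_smul hA, habs, ← hcdef, inv_mul_cancel₀ (ne_of_gt hc)]
    have hmem : ‖sInnerA A (Q z') z'‖ ∈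
        {r | ∃ x, sNormA A x = 1 ∧ r = ‖sInnerA A (Q x) x‖} :=
      ⟨z', hz'norm, rfl⟩
    have hle := le_csSup (bddAbove_wA hA hQb) hmem
    have hval : ‖sInnerA A (Q z') z'‖ =
        c⁻¹ * c⁻¹ * ‖sInnerA A (Q z) z‖ := by
      rw [hz', map_smul, ip_smul_left, ip_smul_right, norm_mul, norm_mul]
      rw [Complex.norm_conj, habs]
      ring
    rw [hval] at hle
    have heq : ‖sInnerA A (Q z) z‖ = c * c * (c⁻¹ * c⁻¹ *
        ‖sInnerA A (Q z) z‖) := by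
      field_simp
    rw [heq, sq]
    calc c * c * (c⁻¹ * c⁻¹ * ‖sInnerA A (Q z) z‖)
        ≤ c * c * wA A Q := by
          apply mul_le_mul_of_nonneg_left hle
          positivity
      _ = wA A Q * (c * c) := by ring

lemma genCS (hA : A.IsPositive) {cQ : ℝ}
    (hQb : ∀ x, sNormA A (Q x) ≤ cQ * sNormA A x) (u v : H) :
    ‖sInnerA A (Q u) v + sInnerA A (Q v) u‖ ≤
      2 * wA A Q * (sNormA A u * sNormA A v) := by
  have step2 : ∀ u v : H, ‖sInnerA A (Q u) v + sInnerA A (Q v) u‖ ≤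
      wA A Q * (sNormA A u ^ 2 + sNormA A v ^ 2) := by
    intro u v
    have pol : sInnerA A (Q (u + v)) (u + v) - sInnerA A (Q (u - v)) (u - v) =
        2 * (sInnerA A (Q u) v + sInnerA A (Q v) u) := by
      simp only [map_add, map_sub, ip_add_left, ip_add_right, ip_sub_left, ip_sub_right]
      ring
    have par : sNormA A (u + v) ^ 2 + sNormA A (u - v) ^ 2 =
        2 * (sNormA A u ^ 2 + sNormA A v ^ 2) := by
      rw [sq_nA hA, sq_nA hA, sq_nA hA, sq_nA hA]
      have hip : sInnerA A (u + v) (u + v) + sInnerA A (u - v) (u - v) =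
          2 * (sInnerA A u u + sInnerA A v v) := by
        simp only [ip_add_left, ip_add_right, ip_sub_left, ip_sub_right]
        ring
      have hre := congrArg Complex.re hip
      simp only [Complex.add_re, Complex.mul_re] at hre ⊢
      norm_num at hre
      linarith
    have habs : ‖2 * (sInnerA A (Q u) v + sInnerA A (Q v) u)‖ ≤
        wA A Q * sNormA A (u + v) ^ 2 + wA A Q * sNormA A (u - v) ^ 2 := by
      rw [← pol]
      calc ‖sInnerA A (Q (u + v)) (u + v) - sInnerA A (Q (u - v)) (u - v)‖
          ≤ ‖sInnerA A (Q (u + v)) (u + v)‖ +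
            ‖sInnerA A (Q (u - v)) (u - v)‖ := by
            rw [sub_eq_add_neg]
            refine (norm_add_le _ _).trans ?_
            rw [norm_neg]
        _ ≤ wA A Q * sNormA A (u + v) ^ 2 + wA A Q * sNormA A (u - v) ^ 2 :=
            add_le_add (abs_ip_Q_le hA hQb _) (abs_ip_Q_le hA hQb _)
    rw [norm_mul] at habs
    simp only [Complex.norm_ofNat] at habs
    have hpar2 : wA A Q * sNormA A (u + v) ^ 2 + wA A Q * sNormA A (u - v) ^ 2 =
        2 * (wA A Q * (sNormA A u ^ 2 + sNormA A v ^ 2)) := by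
      rw [← mul_add, par]
      ring
    linarith [habs, hpar2]
  by_cases hu : sNormA A u = 0
  · have h1 : ‖sInnerA A (Q u) v‖ = 0 := by
      have hQu : sNormA A (Q u) = 0 := by
        have := hQb u
        rw [hu, mul_zero] at this
        exact le_antisymm this (nA_nonneg _)
      have h2 : ‖sInnerA A (Q u) v‖ ≤ 0 := by
        calc ‖sInnerA A (Q u) v‖ ≤ sNormA A (Q u) * sNormA A v := abs_ip_le hA _ _
          _ = 0 := by rw [hQu, zero_mul]
      exact le_antisymm h2 (norm_nonneg _)
    have h2 : ‖sInnerA A (Q v) u‖ = 0 := by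
      have h3 : ‖sInnerA A (Q v) u‖ ≤ 0 := by
        calc ‖sInnerA A (Q v) u‖ ≤ sNormA A (Q v) * sNormA A u := abs_ip_le hA _ _
          _ = 0 := by rw [hu, mul_zero]
      exact le_antisymm h3 (norm_nonneg _)
    calc ‖sInnerA A (Q u) v + sInnerA A (Q v) u‖
        ≤ ‖sInnerA A (Q u) v‖ + ‖sInnerA A (Q v) u‖ :=
          norm_add_le _ _
      _ = 0 := by rw [h1, h2, add_zero]
      _ ≤ 2 * wA A Q * (sNormA A u * sNormA A v) := by
          rw [hu]
          simp
  · by_cases hv : sNormA A v = 0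
    · have h1 : ‖sInnerA A (Q v) u‖ = 0 := by
        have hQv : sNormA A (Q v) = 0 := by
          have := hQb v
          rw [hv, mul_zero] at this
          exact le_antisymm this (nA_nonneg _)
        have h2 : ‖sInnerA A (Q v) u‖ ≤ 0 := by
          calc ‖sInnerA A (Q v) u‖ ≤ sNormA A (Q v) * sNormA A u := abs_ip_le hA _ _
            _ = 0 := by rw [hQv, zero_mul]
        exact le_antisymm h2 (norm_nonneg _)
      have h2 : ‖sInnerA A (Q u) v‖ = 0 := by
        have h3 : ‖sInnerA A (Q u) v‖ ≤ sNormA A (Q u) * sNormA A v :=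
          abs_ip_le hA _ _
        rw [hv, mul_zero] at h3
        exact le_antisymm h3 (norm_nonneg _)
      calc ‖sInnerA A (Q u) v + sInnerA A (Q v) u‖
          ≤ ‖sInnerA A (Q u) v‖ + ‖sInnerA A (Q v) u‖ :=
            norm_add_le _ _
        _ = 0 := by rw [h1, h2, add_zero]
        _ ≤ 2 * wA A Q * (sNormA A u * sNormA A v) := by
            rw [hv]
            simp
    · have hu' : 0 < sNormA A u := lt_of_le_of_ne (nA_nonneg _) (Ne.symm hu)
      have hv' : 0 < sNormA A v := lt_of_le_of_ne (nA_nonneg _) (Ne.symm hv)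
      set t : ℝ := Real.sqrt (sNormA A v / sNormA A u) with ht
      have ht' : 0 < t := Real.sqrt_pos.mpr (div_pos hv' hu')
      have htsq : t ^ 2 = sNormA A v / sNormA A u := Real.sq_sqrt (le_of_lt (div_pos hv' hu'))
      have key := step2 ((t : ℂ) • u) (((t : ℂ))⁻¹ • v)
      have habs_t : ‖((t : ℂ))‖ = t := by
        rw [Complex.norm_real, Real.norm_eq_abs, abs_of_pos ht']
      have habs_t' : ‖((t : ℂ))⁻¹‖ = t⁻¹ := by
        rw [norm_inv, habs_t]
      have hval : sInnerA A (Q ((t : ℂ) • u)) (((t : ℂ))⁻¹ • v) +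
          sInnerA A (Q (((t : ℂ))⁻¹ • v)) ((t : ℂ) • u) =
          sInnerA A (Q u) v + sInnerA A (Q v) u := by
        rw [map_smul, map_smul, ip_smul_left, ip_smul_right, ip_smul_left, ip_smul_right]
        rw [Complex.conj_ofReal, ← Complex.ofReal_inv, Complex.conj_ofReal]
        push_cast
        have htne : (t : ℂ) ≠ 0 := by
          exact_mod_cast Complex.ofReal_ne_zero.mpr (ne_of_gt ht')
        field_simp
      rw [hval] at key
      have hn1 : sNormA A ((t : ℂ) • u) = t * sNormA A u := by
        rw [nA_smul hA, habs_t]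
      have hn2 : sNormA A (((t : ℂ))⁻¹ • v) = t⁻¹ * sNormA A v := by
        rw [nA_smul hA, habs_t']
      rw [hn1, hn2] at key
      have harith : (t * sNormA A u) ^ 2 + (t⁻¹ * sNormA A v) ^ 2 =
          2 * (sNormA A u * sNormA A v) := by
        rw [mul_pow, mul_pow, htsq, inv_pow, htsq]
        field_simp
        ring
      rw [harith] at key
      calc ‖sInnerA A (Q u) v + sInnerA A (Q v) u‖
          ≤ wA A Q * (2 * (sNormA A u * sNormA A v)) := key
        _ = 2 * wA A Q * (sNormA A u * sNormA A v) := by ring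

end main

end Stmt7Aux

theorem stmt7 {H : Type*} [NormedAddCommGroup H] [InnerProductSpace ℂ H] [CompleteSpace H]
    (A : H →L[ℂ] H) (hA : A.IsPositive)
    (Q S Ss : H →L[ℂ] H) (hQ : memBA A Q) (hS : memBA A S) (hSs : IsSharpA A S Ss) :
    wA A (Q ∘L Ss + S ∘L Q) ≤ 2 * opNormA A S * wA A Q ∧
      wA A (Q ∘L Ss - S ∘L Q) ≤ 2 * opNormA A S * wA A Q := by
  classical
  obtain ⟨Qs, hQs⟩ := Stmt7Aux.exists_sharp (A := A) (Q := Q) (fun x => by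
    have := hQ (Set.mem_range_self x)
    simpa [ContinuousLinearMap.comp_apply] using this)
  have hQb : ∀ x, sNormA A (Q x) ≤ Real.sqrt ‖Qs ∘L Q‖ * sNormA A x :=
    Stmt7Aux.nA_pair_le hA hQs
  have hSpair := hSs.1
  have hrange := hSs.2
  have hSsle := Stmt7Aux.Ss_le hA hSpair hrange
  have h2w : (0:ℝ) ≤ 2 * wA A Q := mul_nonneg (by norm_num) Stmt7Aux.wA_nonneg
  have hRHS : 0 ≤ 2 * opNormA A S * wA A Q :=
    mul_nonneg (mul_nonneg (by norm_num) Stmt7Aux.opNormA_nonneg) Stmt7Aux.wA_nonneg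
  constructor
  · apply Real.sSup_le _ hRHS
    rintro r ⟨z, hz, rfl⟩
    have e2 : sInnerA A ((Q ∘L Ss + S ∘L Q) z) z =
        sInnerA A (Q (Ss z)) z + sInnerA A (Q z) (Ss z) := by
      have e1 : (Q ∘L Ss + S ∘L Q) z = Q (Ss z) + S (Q z) := rfl
      rw [e1, Stmt7Aux.ip_add_left, Stmt7Aux.ip_shift' hA hSpair (Q z) z]
    rw [e2]
    have h3 : sNormA A (Ss z) * sNormA A z ≤ opNormA A S := by
      rw [hz, mul_one]
      have := hSsle z
      rwa [hz, mul_one] at this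
    calc ‖sInnerA A (Q (Ss z)) z + sInnerA A (Q z) (Ss z)‖
        ≤ 2 * wA A Q * (sNormA A (Ss z) * sNormA A z) := Stmt7Aux.genCS hA hQb (Ss z) z
      _ ≤ 2 * wA A Q * opNormA A S := mul_le_mul_of_nonneg_left h3 h2w
      _ = 2 * opNormA A S * wA A Q := by ring
  · apply Real.sSup_le _ hRHS
    rintro r ⟨z, hz, rfl⟩
    have e2 : sInnerA A ((Q ∘L Ss - S ∘L Q) z) z =
        sInnerA A (Q (Ss z)) z - sInnerA A (Q z) (Ss z) := by
      have e1 : (Q ∘L Ss - S ∘L Q) z = Q (Ss z) - S (Q z) := rfl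
      rw [e1, Stmt7Aux.ip_sub_left, Stmt7Aux.ip_shift' hA hSpair (Q z) z]
    rw [e2]
    have hI : sInnerA A (Q (Ss z)) (Complex.I • z) + sInnerA A (Q (Complex.I • z)) (Ss z) =
        Complex.I * (sInnerA A (Q (Ss z)) z - sInnerA A (Q z) (Ss z)) := by
      rw [map_smul, Stmt7Aux.ip_smul_right, Stmt7Aux.ip_smul_left, Complex.conj_I]
      ring
    have hnz : sNormA A (Complex.I • z) = 1 := by
      rw [Stmt7Aux.nA_smul hA, Complex.norm_I, one_mul, hz]
    have h3 : sNormA A (Ss z) * sNormA A (Complex.I • z) ≤ opNormA A S := by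
      rw [hnz, mul_one]
      have := hSsle z
      rwa [hz, mul_one] at this
    calc ‖sInnerA A (Q (Ss z)) z - sInnerA A (Q z) (Ss z)‖
        = ‖sInnerA A (Q (Ss z)) (Complex.I • z) +
            sInnerA A (Q (Complex.I • z)) (Ss z)‖ := by
          rw [hI, norm_mul, Complex.norm_I, one_mul]
      _ ≤ 2 * wA A Q * (sNormA A (Ss z) * sNormA A (Complex.I • z)) :=
          Stmt7Aux.genCS hA hQb (Ss z) (Complex.I • z)
      _ ≤ 2 * wA A Q * opNormA A S := mul_le_mul_of_nonneg_left h3 h2w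
      _ = 2 * opNormA A S * wA A Q := by ring
end
end

section
/- Let P denote the orthogonal projection of H onto the closure of the range of A. Then for every T ∈ B_A(H), w_A(P∘T) = w_A(T∘P) = w_A(T). -/
noncomputable section

open ContinuousLinearMap

/-- The orthogonal projection of `H` onto the closure of the range of `A`,
as an operator `H →L[ℂ] H`. -/
def rangeProj {H : Type*} [NormedAddCommGroup H] [InnerProductSpace ℂ H] [CompleteSpace H]
    (A : H →L[ℂ] H) : H →L[ℂ] H :=
  haveI : CompleteSpace ((LinearMap.range (A : H →ₗ[ℂ] H)).topologicalClosure) :=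
    (Submodule.isClosed_topologicalClosure _).completeSpace_coe
  ((LinearMap.range (A : H →ₗ[ℂ] H)).topologicalClosure).subtypeL ∘L
    Submodule.orthogonalProjectionOnto ((LinearMap.range (A : H →ₗ[ℂ] H)).topologicalClosure)

theorem stmt8 {H : Type*} [NormedAddCommGroup H] [InnerProductSpace ℂ H] [CompleteSpace H]
    (A : H →L[ℂ] H) (hA : A.IsPositive)
    (T : H →L[ℂ] H) (hT : memBA A T) :
    wA A (rangeProj A ∘L T) = wA A T ∧ wA A (T ∘L rangeProj A) = wA A T := by
  set K := (LinearMap.range (A : H →ₗ[ℂ] H)).topologicalClosure with hKdef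
  haveI : CompleteSpace K := (Submodule.isClosed_topologicalClosure _).completeSpace_coe
  have hAadj : ContinuousLinearMap.adjoint A = A :=
    ContinuousLinearMap.isSelfAdjoint_iff'.mp hA.isSelfAdjoint
  have hAsa : ∀ x y : H, (inner ℂ (A x) y : ℂ) = inner ℂ x (A y) := by
    intro x y
    rw [← ContinuousLinearMap.adjoint_inner_left, hAadj]
  have hrange : ∀ z : H, A z ∈ K :=
    fun z => Submodule.le_topologicalClosure _ (LinearMap.mem_range_self (A : H →ₗ[ℂ] H) z)
  have hPmem : ∀ y ∈ K, rangeProj A y = y := by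
    intro y hy
    simpa [rangeProj] using Submodule.starProjection_eq_self_iff.mpr hy
  have hPsa : ∀ x y : H, (inner ℂ (rangeProj A x) y : ℂ) = inner ℂ x (rangeProj A y) := by
    intro x y
    simpa [rangeProj] using Submodule.inner_starProjection_left_eq_right K x y
  have hAP : ∀ x, A (rangeProj A x) = A x := by
    intro x
    have hy : x - rangeProj A x ∈ Kᗮ := by
      exact Submodule.sub_starProjection_mem_orthogonal (K := K) x
    have h0 : A (x - rangeProj A x) = 0 := by
      set y := x - rangeProj A x with hy'
      have h1 : (inner ℂ (A (A y)) y : ℂ) = 0 :=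
        (Submodule.mem_orthogonal K y).mp hy _ (hrange (A y))
      rw [hAsa (A y) y] at h1
      have := inner_self_eq_zero.mp h1
      simpa using this
    have := map_sub A x (rangeProj A x)
    rw [h0] at this
    exact (sub_eq_zero.mp this.symm).symm
  have key1 : ∀ x : H, sInnerA A ((rangeProj A ∘L T) x) x = sInnerA A (T x) x := by
    intro x
    simp [sInnerA, hAP]
  have key2 : ∀ x : H, sInnerA A ((T ∘L rangeProj A) x) x = sInnerA A (T x) x := by
    intro x
    obtain ⟨u, hu⟩ := hT ⟨x, rfl⟩
    simp only [sInnerA, ContinuousLinearMap.comp_apply] at *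
    calc (inner ℂ (A (T (rangeProj A x))) x : ℂ)
        = inner ℂ (T (rangeProj A x)) (A x) := hAsa _ _
      _ = inner ℂ (rangeProj A x) (ContinuousLinearMap.adjoint T (A x)) := by
          rw [ContinuousLinearMap.adjoint_inner_right]
      _ = inner ℂ (rangeProj A x) (A u) := by rw [← hu]
      _ = inner ℂ x (rangeProj A (A u)) := hPsa _ _
      _ = inner ℂ x (A u) := by rw [hPmem _ (hrange u)]
      _ = inner ℂ x (ContinuousLinearMap.adjoint T (A x)) := by rw [hu]
      _ = inner ℂ (T x) (A x) := by rw [ContinuousLinearMap.adjoint_inner_right]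
      _ = inner ℂ (A (T x)) x := (hAsa _ _).symm
  constructor
  · unfold wA
    congr 1
    ext r
    exact exists_congr fun x => and_congr_right fun _ => by rw [key1 x]
  · unfold wA
    congr 1
    ext r
    exact exists_congr fun x => and_congr_right fun _ => by rw [key2 x]
end
end

section
/- Let T₁, T₂ ∈ B_A(H). Then w_𝔸([[T₁, T₂],[O, O]]) ≥ (1/2)·max{ w_A(T₁ + iT₂), w_A(T₁ − iT₂) }. -/
noncomputable section

open ContinuousLinearMap

section Aux

variable {H : Type*} [NormedAddCommGroup H] [InnerProductSpace ℂ H] [CompleteSpace H]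

/-- Cauchy–Schwarz for the semi-inner ℂ product induced by a positive operator. -/
private lemma csA {A : H →L[ℂ] H} (hA : A.IsPositive) (x y : H) :
    ‖(inner ℂ (A x) y : ℂ)‖ ≤
      Real.sqrt (inner ℂ (A x) x : ℂ).re * Real.sqrt (inner ℂ (A y) y : ℂ).re := by
  have hsymm : ∀ u v : H, (inner ℂ (A u) v : ℂ) = inner ℂ u (A v) := hA.1
  have hre : ∀ u : H, 0 ≤ (inner ℂ (A u) u : ℂ).re := fun u => by
    simpa [ContinuousLinearMap.reApplyInnerSelf_apply] using hA.2 u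
  let core : PreInnerProductSpace.Core ℂ H :=
    { inner := fun u v => inner ℂ (A u) v
      conj_inner_symm := fun u v => by
        show (starRingEnd ℂ) (inner ℂ (A v) u : ℂ) = (inner ℂ (A u) v : ℂ)
        rw [inner_conj_symm, ← hsymm]
      re_inner_nonneg := hre
      add_left := fun u v w => by
        show (inner ℂ (A (u + v)) w : ℂ) = (inner ℂ (A u) w : ℂ) + (inner ℂ (A v) w : ℂ)
        simp [inner_add_left]
      smul_left := fun u v r => by
        show (inner ℂ (A (r • u)) v : ℂ) = (starRingEnd ℂ) r * (inner ℂ (A u) v : ℂ)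
        simp [inner_smul_left, mul_comm] }
  have h := @InnerProductSpace.Core.inner_mul_inner_self_le ℂ H _ _ _ core x y
  change ‖(inner ℂ (A x) y : ℂ)‖ * ‖(inner ℂ (A y) x : ℂ)‖ ≤
    RCLike.re (inner ℂ (A x) x : ℂ) * RCLike.re (inner ℂ (A y) y : ℂ) at h
  have hxy : ‖(inner ℂ (A y) x : ℂ)‖ = ‖(inner ℂ (A x) y : ℂ)‖ := by
    rw [hsymm y x, ← inner_conj_symm (A x) y, RCLike.norm_conj]
  rw [hxy] at h
  have h1 : ‖(inner ℂ (A x) y : ℂ)‖ ^ 2 ≤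
      Real.sqrt (inner ℂ (A x) x : ℂ).re ^ 2 * Real.sqrt (inner ℂ (A y) y : ℂ).re ^ 2 := by
    rw [Real.sq_sqrt (hre x), Real.sq_sqrt (hre y)]
    simpa [sq] using h
  calc ‖(inner ℂ (A x) y : ℂ)‖ = Real.sqrt (‖(inner ℂ (A x) y : ℂ)‖ ^ 2) :=
        (Real.sqrt_sq (norm_nonneg _)).symm
    _ ≤ Real.sqrt (Real.sqrt (inner ℂ (A x) x : ℂ).re ^ 2 * Real.sqrt (inner ℂ (A y) y : ℂ).re ^ 2) :=
        Real.sqrt_le_sqrt h1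
    _ = _ := by
        rw [← mul_pow, Real.sqrt_sq (mul_nonneg (Real.sqrt_nonneg _) (Real.sqrt_nonneg _))]

/-- A Douglas-type factorization obtained from the closed graph theorem. -/
private lemma exists_S {A T : H →L[ℂ] H} (hA : A.IsPositive) (hT : memBA A T) :
    ∃ S : H →L[ℂ] H, A ∘L S = adjoint T ∘L A := by
  classical
  have hsymm : ∀ u v : H, (inner ℂ (A u) v : ℂ) = inner ℂ u (A v) := hA.1
  set K : Submodule ℂ H := (LinearMap.range (A : H →ₗ[ℂ] H)).topologicalClosure with hK
  have hKclosed : IsClosed (K : Set H) := Submodule.isClosed_topologicalClosure _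
  haveI : CompleteSpace K := hKclosed.completeSpace_coe
  have hker : ∀ w : H, w ∈ (LinearMap.range (A : H →ₗ[ℂ] H))ᗮ → A w = 0 := by
    intro w hw
    have h0 : ∀ u : H, (inner ℂ (A w) u : ℂ) = 0 := by
      intro u
      rw [hsymm w u]
      have := hw (A u) ⟨u, rfl⟩
      rw [← inner_conj_symm] at this
      simpa using congrArg (starRingEnd ℂ) this
    exact ext_inner_right ℂ (by simpa using h0)
  have hKorth : Kᗮ ≤ (LinearMap.range (A : H →ₗ[ℂ] H))ᗮ :=
    Submodule.orthogonal_le (Submodule.le_topologicalClosure _)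
  have hinj : ∀ v : H, v ∈ K → A v = 0 → v = 0 := by
    intro v hv hAv
    have hvorth : v ∈ (LinearMap.range (A : H →ₗ[ℂ] H))ᗮ := by
      intro u hu
      obtain ⟨z, rfl⟩ := hu
      show (inner ℂ (A z) v : ℂ) = 0
      rw [hsymm z v, hAv, inner_zero_right]
    have hv2 : v ∈ (LinearMap.range (A : H →ₗ[ℂ] H))ᗮᗮ :=
      Submodule.topologicalClosure_minimal _
        (Submodule.le_orthogonal_orthogonal (LinearMap.range (A : H →ₗ[ℂ] H)))
        (Submodule.isClosed_orthogonal _) hv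
    exact Submodule.disjoint_def.mp (Submodule.orthogonal_disjoint _) v hvorth hv2
  have hz : ∀ y : H, ∃ z : H, A z = adjoint T (A y) := by
    intro y
    obtain ⟨z, hzz⟩ := hT ⟨y, rfl⟩
    exact ⟨z, hzz⟩
  let f : H → K := fun y => K.orthogonalProjectionOnto ((hz y).choose)
  have hfA : ∀ y : H, A (f y : H) = adjoint T (A y) := by
    intro y
    have hmem : (hz y).choose - (f y : H) ∈ Kᗮ :=
      K.sub_starProjection_mem_orthogonal _
    have h0 : A ((hz y).choose - (f y : H)) = 0 := hker _ (hKorth hmem)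
    rw [map_sub, sub_eq_zero] at h0
    rw [← h0, (hz y).choose_spec]
  have hlin_add : ∀ y y' : H, (f (y + y') : H) = (f y : H) + (f y' : H) := by
    intro y y'
    have hmem : (f (y + y') : H) - ((f y : H) + (f y' : H)) ∈ K :=
      K.sub_mem (f (y + y')).2 (K.add_mem (f y).2 (f y').2)
    have hA0 : A ((f (y + y') : H) - ((f y : H) + (f y' : H))) = 0 := by
      rw [map_sub, map_add, hfA, hfA, hfA, map_add, map_add]
      abel
    have := hinj _ hmem hA0
    rwa [sub_eq_zero] at this
  have hlin_smul : ∀ (c : ℂ) (y : H), (f (c • y) : H) = c • (f y : H) := by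
    intro c y
    have hmem : (f (c • y) : H) - c • (f y : H) ∈ K :=
      K.sub_mem (f (c • y)).2 (K.smul_mem c (f y).2)
    have hA0 : A ((f (c • y) : H) - c • (f y : H)) = 0 := by
      rw [map_sub, map_smul, hfA, hfA, map_smul, map_smul, sub_self]
    have := hinj _ hmem hA0
    rwa [sub_eq_zero] at this
  let g : H →ₗ[ℂ] H :=
    { toFun := fun y => (f y : H)
      map_add' := hlin_add
      map_smul' := hlin_smul }
  have hgK : ∀ y, g y ∈ K := fun y => (f y).2
  have hgA : ∀ y, A (g y) = adjoint T (A y) := hfA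
  have hcont : Continuous g := by
    apply g.continuous_of_seq_closed_graph
    intro u x y hux huy
    have h1 : Filter.Tendsto (fun n => A (g (u n))) Filter.atTop (nhds (A y)) :=
      (A.continuous.tendsto y).comp huy
    have h2 : Filter.Tendsto (fun n => A (g (u n))) Filter.atTop (nhds (A (g x))) := by
      have heq : (fun n => A (g (u n))) = fun n => adjoint T (A (u n)) := by
        funext n; exact hgA (u n)
      rw [heq, hgA x]
      exact ((adjoint T).continuous.tendsto _).comp ((A.continuous.tendsto _).comp hux)
    have hAy : A y = A (g x) := tendsto_nhds_unique h1 h2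
    have hyK : y ∈ K := by
      have : ∀ n, g (u n) ∈ (K : Set H) := fun n => hgK (u n)
      exact hKclosed.mem_of_tendsto huy (Filter.Eventually.of_forall this)
    have : y - g x = 0 := by
      apply hinj _ (K.sub_mem hyK (hgK x))
      rw [map_sub, hAy, sub_self]
    exact sub_eq_zero.mp this
  refine ⟨⟨g, hcont⟩, ?_⟩
  ext y
  exact hgA y

/-- The iteration argument: an operator intertwined with its adjoint through `A` is
`A`-contractive up to its operator norm. -/
private lemma nuIter {A R : H →L[ℂ] H} (hA : A.IsPositive) (hR : A ∘L R = adjoint R ∘L A)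
    (x : H) :
    Real.sqrt (inner ℂ (A (R x)) (R x) : ℂ).re ≤ ‖R‖ * Real.sqrt (inner ℂ (A x) x : ℂ).re := by
  have hre : ∀ u : H, 0 ≤ (inner ℂ (A u) u : ℂ).re := fun u => by
    simpa [ContinuousLinearMap.reApplyInnerSelf_apply] using hA.2 u
  set ν : H → ℝ := fun u => Real.sqrt (inner ℂ (A u) u : ℂ).re with hν
  have hνnn : ∀ u, 0 ≤ ν u := fun u => Real.sqrt_nonneg _
  have hνsq : ∀ u, ν u ^ 2 = (inner ℂ (A u) u : ℂ).re := fun u => Real.sq_sqrt (hre u)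
  have hRpt : ∀ u : H, A (R u) = adjoint R (A u) := fun u =>
    congrFun (congrArg DFunLike.coe hR) u
  have hpow : ∀ (n : ℕ) (u v : H), (inner ℂ (A ((R ^ n) u)) v : ℂ) = inner ℂ (A u) ((R ^ n) v) := by
    intro n
    induction n with
    | zero => intro u v; simp
    | succ n ih =>
      intro u v
      have e1 : (R ^ (n + 1)) u = R ((R ^ n) u) := by rw [pow_succ']; rfl
      have e2 : (R ^ n) (R v) = (R ^ (n + 1)) v := by rw [pow_succ]; rfl
      rw [e1, hRpt, adjoint_inner_left, ih u (R v), e2]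
  have hpownorm : ∀ (n : ℕ) (u : H), ‖(R ^ n) u‖ ≤ ‖R‖ ^ n * ‖u‖ := by
    intro n
    induction n with
    | zero => intro u; simp
    | succ n ih =>
      intro u
      have e1 : (R ^ (n + 1)) u = R ((R ^ n) u) := by rw [pow_succ']; rfl
      rw [e1, pow_succ]
      calc ‖R ((R ^ n) u)‖ ≤ ‖R‖ * ‖(R ^ n) u‖ := R.le_opNorm _
        _ ≤ ‖R‖ * (‖R‖ ^ n * ‖u‖) := mul_le_mul_of_nonneg_left (ih u) (norm_nonneg R)
        _ = ‖R‖ ^ n * ‖R‖ * ‖u‖ := by ring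
  have hνbnd : ∀ u : H, ν u ≤ Real.sqrt ‖A‖ * ‖u‖ := by
    intro u
    have h1 : (inner ℂ (A u) u : ℂ).re ≤ ‖A‖ * ‖u‖ ^ 2 := by
      calc (inner ℂ (A u) u : ℂ).re ≤ ‖(inner ℂ (A u) u : ℂ)‖ := Complex.re_le_norm _
        _ ≤ ‖A u‖ * ‖u‖ := norm_inner_le_norm _ _
        _ ≤ ‖A‖ * ‖u‖ * ‖u‖ := mul_le_mul_of_nonneg_right (A.le_opNorm u) (norm_nonneg u)
        _ = ‖A‖ * ‖u‖ ^ 2 := by ring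
    calc ν u ≤ Real.sqrt (‖A‖ * ‖u‖ ^ 2) := Real.sqrt_le_sqrt h1
      _ = Real.sqrt ‖A‖ * ‖u‖ := by
          rw [Real.sqrt_mul (norm_nonneg A), Real.sqrt_sq (norm_nonneg u)]
  set b : ℕ → ℝ := fun k => ν ((R ^ (2 ^ k)) x) with hb
  have hb0 : b 0 = ν (R x) := by simp [hb, pow_one]
  have hstep : ∀ k, b k ^ 2 ≤ ν x * b (k + 1) := by
    intro k
    have e1 : (R ^ (2 ^ k)) ((R ^ (2 ^ k)) x) = (R ^ (2 ^ (k + 1))) x := by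
      rw [← ContinuousLinearMap.mul_apply, ← pow_add]
      congr 2
      omega
    calc b k ^ 2 = (inner ℂ (A ((R ^ (2 ^ k)) x)) ((R ^ (2 ^ k)) x) : ℂ).re := hνsq _
      _ = (inner ℂ (A x) ((R ^ (2 ^ (k + 1))) x) : ℂ).re := by rw [hpow, e1]
      _ ≤ ‖(inner ℂ (A x) ((R ^ (2 ^ (k + 1))) x) : ℂ)‖ := Complex.re_le_norm _
      _ ≤ ν x * b (k + 1) := csA hA _ _
  have hiter : ∀ n, b 0 ^ (2 ^ n) ≤ ν x ^ (2 ^ n - 1) * b n := by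
    intro n
    induction n with
    | zero => simpa using le_refl (b 0)
    | succ n ih =>
      have h1 : (b 0 ^ (2 ^ n)) ^ 2 ≤ (ν x ^ (2 ^ n - 1) * b n) ^ 2 :=
        pow_le_pow_left₀ (pow_nonneg (hνnn _) _) ih 2
      calc b 0 ^ 2 ^ (n + 1) = (b 0 ^ (2 ^ n)) ^ 2 := by rw [pow_succ, pow_mul]
        _ ≤ (ν x ^ (2 ^ n - 1) * b n) ^ 2 := h1
        _ = ν x ^ (2 * (2 ^ n - 1)) * b n ^ 2 := by rw [mul_pow, ← pow_mul]; ring_nf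
        _ ≤ ν x ^ (2 * (2 ^ n - 1)) * (ν x * b (n + 1)) :=
            mul_le_mul_of_nonneg_left (hstep n) (pow_nonneg (hνnn x) _)
        _ = ν x ^ (2 ^ (n + 1) - 1) * b (n + 1) := by
            rw [← mul_assoc, mul_comm (ν x ^ (2 * (2 ^ n - 1))) (ν x), ← pow_succ']
            congr 2
            have : 1 ≤ 2 ^ n := Nat.one_le_two_pow
            omega
  show ν (R x) ≤ ‖R‖ * ν x
  by_cases hx : ν x = 0
  · have h0 := hstep 0
    rw [hx, zero_mul] at h0
    have hb00 : b 0 = 0 := by nlinarith [hνnn ((R ^ (2 ^ 0)) x)]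
    rw [← hb0, hb00, hx, mul_zero]
  · by_cases hR0 : ‖R‖ = 0
    · have hR' : R = 0 := norm_eq_zero.mp hR0
      rw [hR']
      simp [hν]
    · by_contra hgt
      push_neg at hgt
      have hxpos : 0 < ν x := lt_of_le_of_ne (hνnn x) (Ne.symm hx)
      have hRpos : 0 < ‖R‖ := lt_of_le_of_ne (norm_nonneg R) (Ne.symm hR0)
      have hbpos : 0 < ‖R‖ * ν x := mul_pos hRpos hxpos
      set q : ℝ := b 0 / (‖R‖ * ν x) with hq
      have hq1 : 1 < q := by
        rw [hq, lt_div_iff₀ hbpos, one_mul, hb0]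
        exact hgt
      set Mc : ℝ := Real.sqrt ‖A‖ * ‖x‖ / ν x with hMc
      have hkey : ∀ n : ℕ, q ^ (2 ^ n) ≤ Mc := by
        intro n
        have h1 : b 0 ^ (2 ^ n) ≤ ν x ^ (2 ^ n - 1) *
            (Real.sqrt ‖A‖ * (‖R‖ ^ (2 ^ n) * ‖x‖)) := by
          calc b 0 ^ (2 ^ n) ≤ ν x ^ (2 ^ n - 1) * b n := hiter n
            _ ≤ ν x ^ (2 ^ n - 1) * (Real.sqrt ‖A‖ * (‖R‖ ^ (2 ^ n) * ‖x‖)) := by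
                apply mul_le_mul_of_nonneg_left _ (pow_nonneg (hνnn x) _)
                calc b n ≤ Real.sqrt ‖A‖ * ‖(R ^ (2 ^ n)) x‖ := hνbnd _
                  _ ≤ Real.sqrt ‖A‖ * (‖R‖ ^ (2 ^ n) * ‖x‖) :=
                      mul_le_mul_of_nonneg_left (hpownorm _ x) (Real.sqrt_nonneg _)
        have hsplit : ν x ^ (2 ^ n : ℕ) = ν x ^ (2 ^ n - 1) * ν x := by
          rw [← pow_succ]
          congr 1
          have : 1 ≤ 2 ^ n := Nat.one_le_two_pow
          omega
        rw [hq, div_pow, div_le_iff₀ (pow_pos hbpos _), hMc]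
        calc b 0 ^ 2 ^ n ≤ ν x ^ (2 ^ n - 1) * (Real.sqrt ‖A‖ * (‖R‖ ^ (2 ^ n) * ‖x‖)) := h1
          _ = Real.sqrt ‖A‖ * ‖x‖ / ν x * (‖R‖ * ν x) ^ 2 ^ n := by
              rw [mul_pow, hsplit]
              field_simp
      obtain ⟨n, hn⟩ := pow_unbounded_of_one_lt Mc hq1
      have h2 : q ^ n ≤ q ^ (2 ^ n) := pow_le_pow_right₀ hq1.le (Nat.lt_two_pow_self (n := n)).le
      linarith [hkey n]

/-- Operators in `B_A(H)` are `A`-bounded: quantitative Cauchy–Schwarz-type bound. -/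
private lemma memBA_bound_s10 {A T : H →L[ℂ] H} (hA : A.IsPositive) (hT : memBA A T) :
    ∃ C : ℝ, 0 ≤ C ∧ ∀ x y : H, ‖(inner ℂ (A (T x)) y : ℂ)‖ ≤
      C * (Real.sqrt (inner ℂ (A x) x : ℂ).re * Real.sqrt (inner ℂ (A y) y : ℂ).re) := by
  have hre : ∀ u : H, 0 ≤ (inner ℂ (A u) u : ℂ).re := fun u => by
    simpa [ContinuousLinearMap.reApplyInnerSelf_apply] using hA.2 u
  obtain ⟨S, hS⟩ := exists_S hA hT
  have hadj : adjoint S ∘L A = A ∘L T := by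
    have h := congrArg ContinuousLinearMap.adjoint hS
    rwa [adjoint_comp, adjoint_comp, adjoint_adjoint, hA.isSelfAdjoint.adjoint_eq] at h
  set R : H →L[ℂ] H := S ∘L T with hRdef
  have hSpt : ∀ u : H, A (S u) = adjoint T (A u) := fun u =>
    congrFun (congrArg DFunLike.coe hS) u
  have hadjpt : ∀ u : H, adjoint S (A u) = A (T u) := fun u =>
    congrFun (congrArg DFunLike.coe hadj) u
  have hR : A ∘L R = adjoint R ∘L A := by
    ext u
    show A (S (T u)) = adjoint (S ∘L T) (A u)
    rw [adjoint_comp]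
    show A (S (T u)) = adjoint T (adjoint S (A u))
    rw [hSpt (T u), hadjpt u]
  have hTb : ∀ x : H, Real.sqrt (inner ℂ (A (T x)) (T x) : ℂ).re ≤
      Real.sqrt ‖R‖ * Real.sqrt (inner ℂ (A x) x : ℂ).re := by
    intro x
    have h1 : (inner ℂ (A (T x)) (T x) : ℂ).re ≤ ‖R‖ * ((inner ℂ (A x) x : ℂ).re) := by
      have e1 : (inner ℂ (A (T x)) (T x) : ℂ) = inner ℂ (A x) (R x) := by
        rw [← hadjpt x, adjoint_inner_left]
        rfl
      calc (inner ℂ (A (T x)) (T x) : ℂ).re = (inner ℂ (A x) (R x) : ℂ).re := by rw [e1]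
        _ ≤ ‖(inner ℂ (A x) (R x) : ℂ)‖ := Complex.re_le_norm _
        _ ≤ Real.sqrt (inner ℂ (A x) x : ℂ).re * Real.sqrt (inner ℂ (A (R x)) (R x) : ℂ).re :=
            csA hA _ _
        _ ≤ Real.sqrt (inner ℂ (A x) x : ℂ).re * (‖R‖ * Real.sqrt (inner ℂ (A x) x : ℂ).re) :=
            mul_le_mul_of_nonneg_left (nuIter hA hR x) (Real.sqrt_nonneg _)
        _ = ‖R‖ * ((Real.sqrt (inner ℂ (A x) x : ℂ).re) ^ 2) := by ring
        _ = ‖R‖ * ((inner ℂ (A x) x : ℂ).re) := by rw [Real.sq_sqrt (hre x)]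
    calc Real.sqrt (inner ℂ (A (T x)) (T x) : ℂ).re
        ≤ Real.sqrt (‖R‖ * ((inner ℂ (A x) x : ℂ).re)) := Real.sqrt_le_sqrt h1
      _ = Real.sqrt ‖R‖ * Real.sqrt (inner ℂ (A x) x : ℂ).re := Real.sqrt_mul (norm_nonneg R) _
  refine ⟨Real.sqrt ‖R‖, Real.sqrt_nonneg _, fun x y => ?_⟩
  calc ‖(inner ℂ (A (T x)) y : ℂ)‖
      ≤ Real.sqrt (inner ℂ (A (T x)) (T x) : ℂ).re * Real.sqrt (inner ℂ (A y) y : ℂ).re := csA hA _ _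
    _ ≤ (Real.sqrt ‖R‖ * Real.sqrt (inner ℂ (A x) x : ℂ).re) * Real.sqrt (inner ℂ (A y) y : ℂ).re :=
        mul_le_mul_of_nonneg_right (hTb x) (Real.sqrt_nonneg _)
    _ = Real.sqrt ‖R‖ * (Real.sqrt (inner ℂ (A x) x : ℂ).re * Real.sqrt (inner ℂ (A y) y : ℂ).re) :=
        by ring

end Aux

theorem stmt10 {H : Type*} [NormedAddCommGroup H] [InnerProductSpace ℂ H] [CompleteSpace H]
    (A : H →L[ℂ] H) (hA : A.IsPositive)
    (T₁ T₂ : H →L[ℂ] H) (hT₁ : memBA A T₁) (hT₂ : memBA A T₂) :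
    wA (blk2 A 0 0 A) (blk2 T₁ T₂ 0 0) ≥
      (1 / 2) * max (wA A (T₁ + Complex.I • T₂)) (wA A (T₁ - Complex.I • T₂)) := by
  classical
  have hre : ∀ u : H, 0 ≤ (inner ℂ (A u) u : ℂ).re := fun u => by
    simpa [ContinuousLinearMap.reApplyInnerSelf_apply] using hA.2 u
  obtain ⟨C₁, hC₁0, hC₁⟩ := memBA_bound_s10 hA hT₁
  obtain ⟨C₂, hC₂0, hC₂⟩ := memBA_bound_s10 hA hT₂
  set 𝔸 : WithLp 2 (H × H) →L[ℂ] WithLp 2 (H × H) := blk2 A 0 0 A with h𝔸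
  set M : WithLp 2 (H × H) →L[ℂ] WithLp 2 (H × H) := blk2 T₁ T₂ 0 0 with hM
  set S₂ : Set ℝ := {r | ∃ u, sNormA 𝔸 u = 1 ∧ r = ‖sInnerA 𝔸 (M u) u‖} with hS₂
  have hwAeq : wA 𝔸 M = sSup S₂ := rfl
  -- basic computations on the block operators
  have hInner𝔸 : ∀ u v : WithLp 2 (H × H),
      sInnerA 𝔸 u v = inner ℂ (A u.fst) v.fst + inner ℂ (A u.snd) v.snd := by
    intro u v
    simp [sInnerA, h𝔸, blk2]
  have hInnerM : ∀ u : WithLp 2 (H × H),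
      sInnerA 𝔸 (M u) u = inner ℂ (A (T₁ u.fst + T₂ u.snd)) u.fst := by
    intro u
    simp [sInnerA, h𝔸, hM, blk2, inner_add_left]
  -- S₂ is bounded above
  have hBdd : BddAbove S₂ := by
    refine ⟨C₁ + C₂, fun r hr => ?_⟩
    obtain ⟨u, hu1, hru⟩ := hr
    have hu1' : (inner ℂ (A u.fst) u.fst : ℂ).re + (inner ℂ (A u.snd) u.snd : ℂ).re = 1 := by
      have := hu1
      unfold sNormA at this
      rw [hInner𝔸 u u] at this
      have h := Real.sqrt_eq_one.mp this
      simpa using h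
    have hf1 : Real.sqrt (inner ℂ (A u.fst) u.fst : ℂ).re ≤ 1 := by
      rw [show (1:ℝ) = Real.sqrt 1 by rw [Real.sqrt_one]]
      exact Real.sqrt_le_sqrt (by linarith [hre u.snd])
    have hf2 : Real.sqrt (inner ℂ (A u.snd) u.snd : ℂ).re ≤ 1 := by
      rw [show (1:ℝ) = Real.sqrt 1 by rw [Real.sqrt_one]]
      exact Real.sqrt_le_sqrt (by linarith [hre u.fst])
    have hb1 := hC₁ u.fst u.fst
    have hb2 := hC₂ u.snd u.fst
    have hsn : ∀ w : H, 0 ≤ Real.sqrt (inner ℂ (A w) w : ℂ).re := fun w => Real.sqrt_nonneg _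
    have hs1 : Real.sqrt (inner ℂ (A u.fst) u.fst : ℂ).re *
        Real.sqrt (inner ℂ (A u.fst) u.fst : ℂ).re ≤ 1 :=
      mul_le_one₀ hf1 (hsn u.fst) hf1
    have hs2 : Real.sqrt (inner ℂ (A u.snd) u.snd : ℂ).re *
        Real.sqrt (inner ℂ (A u.fst) u.fst : ℂ).re ≤ 1 :=
      mul_le_one₀ hf2 (hsn u.fst) hf1
    have q1 : ‖(inner ℂ (A (T₁ u.fst)) u.fst : ℂ)‖ ≤ C₁ :=
      hb1.trans (mul_le_of_le_one_right hC₁0 hs1)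
    have q2 : ‖(inner ℂ (A (T₂ u.snd)) u.fst : ℂ)‖ ≤ C₂ :=
      hb2.trans (mul_le_of_le_one_right hC₂0 hs2)
    rw [hru, hInnerM u]
    calc ‖(inner ℂ (A (T₁ u.fst + T₂ u.snd)) u.fst : ℂ)‖
        = ‖(inner ℂ (A (T₁ u.fst)) u.fst : ℂ) + inner ℂ (A (T₂ u.snd)) u.fst‖ := by
          rw [map_add, inner_add_left]
      _ ≤ ‖(inner ℂ (A (T₁ u.fst)) u.fst : ℂ)‖ + ‖(inner ℂ (A (T₂ u.snd)) u.fst : ℂ)‖ :=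
          norm_add_le _ _
      _ ≤ C₁ + C₂ := add_le_add q1 q2
  have hssnn : 0 ≤ sSup S₂ := by
    apply Real.sSup_nonneg
    rintro r ⟨u, hu1, rfl⟩
    exact norm_nonneg _
  -- key embedding
  have hkey : ∀ (c : H →L[ℂ] H) (ε : ℂ), ‖ε‖ = 1 → (∀ z : H, c z = T₁ z + ε • T₂ z) →
      wA A c ≤ 2 * sSup S₂ := by
    intro c ε hε hc
    apply Real.sSup_le _ (by linarith)
    rintro r ⟨x, hx1, rfl⟩
    have hre1 : (inner ℂ (A x) x : ℂ).re = 1 := by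
      unfold sNormA sInnerA at hx1
      exact Real.sqrt_eq_one.mp hx1
    set t : ℝ := (Real.sqrt 2)⁻¹ with ht
    have ht0 : 0 ≤ t := by positivity
    have ht2 : t ^ 2 = 1 / 2 := by
      rw [ht, inv_pow, Real.sq_sqrt (by norm_num : (0:ℝ) ≤ 2)]
      norm_num
    set u : WithLp 2 (H × H) :=
      (WithLp.equiv 2 (H × H)).symm (((t : ℂ)) • x, (ε * (t : ℂ)) • x) with hu
    have hufst : u.fst = (t : ℂ) • x := rfl
    have husnd : u.snd = (ε * (t : ℂ)) • x := rfl
    have hzre : ∀ (z : ℂ) (w : ℂ), ((starRingEnd ℂ) z * (z * w)).re = ‖z‖ ^ 2 * w.re := by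
      intro z w
      rw [← mul_assoc, mul_comm ((starRingEnd ℂ) z) z, Complex.mul_conj', ← Complex.ofReal_pow]
      exact Complex.re_ofReal_mul _ _
    have hn1 : ‖(t : ℂ)‖ = t := by
      rw [Complex.norm_real, Real.norm_of_nonneg ht0]
    have hn2 : ‖ε * (t : ℂ)‖ = t := by
      rw [norm_mul, hε, one_mul, hn1]
    -- the smul inner ℂ computations
    have hin1 : (inner ℂ (A u.fst) u.fst : ℂ).re = t ^ 2 := by
      rw [hufst, map_smul, inner_smul_left, inner_smul_right, hzre, hn1, hre1, mul_one]
    have hin2 : (inner ℂ (A u.snd) u.snd : ℂ).re = t ^ 2 := by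
      rw [husnd, map_smul, inner_smul_left, inner_smul_right, hzre, hn2, hre1, mul_one]
    have hu1 : sNormA 𝔸 u = 1 := by
      unfold sNormA
      rw [hInner𝔸 u u]
      have : ((inner ℂ (A u.fst) u.fst : ℂ) + inner ℂ (A u.snd) u.snd).re = 1 := by
        rw [Complex.add_re, hin1, hin2, ht2]
        norm_num
      rw [this, Real.sqrt_one]
    have hTu : T₁ u.fst + T₂ u.snd = (t : ℂ) • c x := by
      rw [hufst, husnd, map_smul, map_smul, hc x, smul_add, smul_smul, mul_comm (t : ℂ) ε]
    have hval : sInnerA 𝔸 (M u) u = ((t ^ 2 : ℝ) : ℂ) * inner ℂ (A (c x)) x := by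
      rw [hInnerM u, hTu, map_smul, inner_smul_left, hufst, inner_smul_right,
        Complex.conj_ofReal, ← mul_assoc, ← Complex.ofReal_mul, ← sq]
    have hmem : (1 / 2 : ℝ) * ‖sInnerA A (c x) x‖ ∈ S₂ := by
      refine ⟨u, hu1, ?_⟩
      rw [hval]
      rw [norm_mul, Complex.norm_real, ht2]
      unfold sInnerA
      rw [Real.norm_of_nonneg (by norm_num : (0:ℝ) ≤ 1/2)]
    have := le_csSup hBdd hmem
    linarith
  have h1 : wA A (T₁ + Complex.I • T₂) ≤ 2 * sSup S₂ := by
    apply hkey _ Complex.I (by simp)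
    intro z
    simp [ContinuousLinearMap.add_apply, ContinuousLinearMap.smul_apply]
  have h2 : wA A (T₁ - Complex.I • T₂) ≤ 2 * sSup S₂ := by
    apply hkey _ (-Complex.I) (by simp)
    intro z
    simp [ContinuousLinearMap.sub_apply, ContinuousLinearMap.smul_apply, sub_eq_add_neg,
      neg_smul]
  rw [ge_iff_le, hwAeq]
  have hmax := max_le h1 h2
  linarith
end
end
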